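/- arXiv:1306.0236 — 7 statements merged into one kernel-verified Lean document; each statement's English description precedes it below -/
import Mathlib

section
/- Let u(x,y) = cos y − cos x on ℝ². Define w(x,y) = ln[ (1 + tan²(x/2))(1 + tan²(y/2)) / (1 + |tan(x/2)||tan(y/2)|)² ] for (x,y) ∈ (−π,π)². Then σ := e^w is a positive continuous function on (−π,π)², and div(σ∇u) = 0 holds in (−π,π)² \ ({x=0} ∪ {y=0}) (where σ is C¹). -/
open Real Topology Filter

/-- Partial derivative in x. -/
noncomputable def pdx (f : ℝ × ℝ → ℝ) (p : ℝ × ℝ) : ℝ := fderiv ℝ f p (1, 0)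
/-- Partial derivative in y. -/
noncomputable def pdy (f : ℝ × ℝ → ℝ) (p : ℝ × ℝ) : ℝ := fderiv ℝ f p (0, 1)

lemma stmt2_hu (q : ℝ × ℝ) : HasFDerivAt (fun p : ℝ × ℝ => Real.cos p.2 - Real.cos p.1)
    ((-Real.sin q.2) • (ContinuousLinearMap.snd ℝ ℝ ℝ) - (-Real.sin q.1) • (ContinuousLinearMap.fst ℝ ℝ ℝ)) q := by
  have h1 := (Real.hasDerivAt_cos q.2).comp_hasFDerivAt q (hasFDerivAt_snd (𝕜 := ℝ) (p := q))
  have h2 := (Real.hasDerivAt_cos q.1).comp_hasFDerivAt q (hasFDerivAt_fst (𝕜 := ℝ) (p := q))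
  exact h1.sub h2

lemma stmt2_pdxu (q : ℝ × ℝ) :
    fderiv ℝ (fun p : ℝ × ℝ => Real.cos p.2 - Real.cos p.1) q (1,0) = Real.sin q.1 := by
  rw [(stmt2_hu q).fderiv]; simp

lemma stmt2_pdyu (q : ℝ × ℝ) :
    fderiv ℝ (fun p : ℝ × ℝ => Real.cos p.2 - Real.cos p.1) q (0,1) = -Real.sin q.2 := by
  rw [(stmt2_hu q).fderiv]; simp

lemma stmt2_sin_eq (x : ℝ) (h : Real.cos (x/2) ≠ 0) :
    Real.sin x = 2 * Real.tan (x/2) / (1 + Real.tan (x/2)^2) := by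
  have h2 : Real.sin x = 2 * Real.sin (x/2) * Real.cos (x/2) := by
    rw [show x = 2 * (x/2) by ring, Real.sin_two_mul]; ring_nf
  have h4 : Real.sin (x/2)^2 + Real.cos (x/2)^2 = 1 := Real.sin_sq_add_cos_sq _
  rw [h2, Real.tan_eq_sin_div_cos]
  field_simp
  linear_combination Real.sin (x/2) * h4

lemma stmt2_abs_eq_c {c z : ℝ} (hc : c = 1 ∨ c = -1) (h : 0 < c * z) : |z| = c * z := by
  rcases hc with rfl | rfl
  · rw [one_mul] at h ⊢; exact abs_of_pos h
  · have : z < 0 := by linarith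
    rw [abs_of_neg this]; ring

lemma stmt2_cos_ne (x : ℝ) (hx : x ∈ Set.Ioo (-π) π) : Real.cos (x/2) ≠ 0 := by
  have := Real.pi_pos
  exact ne_of_gt (Real.cos_pos_of_mem_Ioo ⟨by simp at hx ⊢; linarith [hx.1], by linarith [hx.2]⟩)

lemma stmt2_tan_ne (x : ℝ) (hx : x ∈ Set.Ioo (-π) π) (h0 : x ≠ 0) : Real.tan (x/2) ≠ 0 := by
  have hc := stmt2_cos_ne x hx
  have hs : Real.sin (x/2) ≠ 0 := by
    rw [Ne, Real.sin_eq_zero_iff_of_lt_of_lt (by linarith [hx.1, Real.pi_pos]) (by linarith [hx.2, Real.pi_pos])]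
    intro h; apply h0; linarith
  rw [Real.tan_eq_sin_div_cos]
  exact div_ne_zero hs hc

set_option maxHeartbeats 1000000 in
/-- for u(x,y) = cos y − cos x and the explicit w, σ := e^w is positive and
continuous on (−π,π)², and div(σ∇u) = 0 away from the axes. -/
theorem stmt2 :
    let u : ℝ × ℝ → ℝ := fun p => Real.cos p.2 - Real.cos p.1
    let w : ℝ × ℝ → ℝ := fun p =>
      Real.log ((1 + Real.tan (p.1 / 2) ^ 2) * (1 + Real.tan (p.2 / 2) ^ 2) /
        (1 + |Real.tan (p.1 / 2)| * |Real.tan (p.2 / 2)|) ^ 2)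
    let σ : ℝ × ℝ → ℝ := fun p => Real.exp (w p)
    let S : Set (ℝ × ℝ) := Set.Ioo (-π) π ×ˢ Set.Ioo (-π) π
    (∀ p ∈ S, 0 < σ p) ∧ ContinuousOn σ S ∧
    (∀ p ∈ S, p.1 ≠ 0 → p.2 ≠ 0 →
      pdx (fun q => σ q * pdx u q) p + pdy (fun q => σ q * pdy u q) p = 0) := by
  intro u w σ S
  have hudef : u = (fun p : ℝ × ℝ => Real.cos p.2 - Real.cos p.1) := rfl
  set A : ℝ × ℝ → ℝ := fun p =>
      (1 + Real.tan (p.1 / 2) ^ 2) * (1 + Real.tan (p.2 / 2) ^ 2) /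
        (1 + |Real.tan (p.1 / 2)| * |Real.tan (p.2 / 2)|) ^ 2 with hA
  have hApos : ∀ q, 0 < A q := by
    intro q; rw [hA]; positivity
  have hσA : σ = A := by
    funext q
    exact Real.exp_log (hApos q)
  refine ⟨fun p _ => Real.exp_pos _, ?_, ?_⟩
  · -- continuity
    rw [hσA]
    intro p hp
    have hca := stmt2_cos_ne p.1 hp.1
    have hcb := stmt2_cos_ne p.2 hp.2
    have ht : ContinuousAt (fun q : ℝ × ℝ => Real.tan (q.1/2)) p := by
      have h1 : ContinuousAt (fun q : ℝ × ℝ => q.1/2) p := (continuous_fst.div_const 2).continuousAt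
      exact ContinuousAt.comp (g := Real.tan) (f := fun q : ℝ × ℝ => q.1/2) (x := p) (Real.continuousAt_tan.mpr hca) h1
    have hs : ContinuousAt (fun q : ℝ × ℝ => Real.tan (q.2/2)) p := by
      have h1 : ContinuousAt (fun q : ℝ × ℝ => q.2/2) p := (continuous_snd.div_const 2).continuousAt
      exact ContinuousAt.comp (g := Real.tan) (f := fun q : ℝ × ℝ => q.2/2) (x := p) (Real.continuousAt_tan.mpr hcb) h1
    have hden : (1 + |Real.tan (p.1/2)| * |Real.tan (p.2/2)|) ^ 2 ≠ 0 := by positivity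
    exact ContinuousAt.continuousWithinAt <|
      (((continuousAt_const.add (ht.pow 2)).mul (continuousAt_const.add (hs.pow 2))).div
        (((continuousAt_const.add (ht.abs.mul hs.abs))).pow 2) hden)
  · -- main computation
    intro p hp hx0 hy0
    have hca := stmt2_cos_ne p.1 hp.1
    have hcb := stmt2_cos_ne p.2 hp.2
    have hta := stmt2_tan_ne p.1 hp.1 hx0
    have htb := stmt2_tan_ne p.2 hp.2 hy0
    set c : ℝ := if 0 < Real.tan (p.1/2) * Real.tan (p.2/2) then 1 else -1 with hc
    have hc1 : c = 1 ∨ c = -1 := by rw [hc]; split <;> simp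
    have hcpos : 0 < c * (Real.tan (p.1/2) * Real.tan (p.2/2)) := by
      rw [hc]; split
      · rw [one_mul]; assumption
      · rcases (mul_ne_zero hta htb).lt_or_gt with h | h
        · nlinarith
        · exact absurd h (by assumption)
    -- the open set U
    set g : ℝ × ℝ → ℝ := fun q => c * (Real.tan (q.1/2) * Real.tan (q.2/2)) with hg
    have hgcont : ∀ q ∈ S, ContinuousAt g q := by
      intro q hq
      have ht : ContinuousAt (fun r : ℝ × ℝ => Real.tan (r.1/2)) q := by
        have h1 : ContinuousAt (fun r : ℝ × ℝ => r.1/2) q := (continuous_fst.div_const 2).continuousAt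
        exact ContinuousAt.comp (g := Real.tan) (f := fun r : ℝ × ℝ => r.1/2) (x := q) (Real.continuousAt_tan.mpr (stmt2_cos_ne q.1 hq.1)) h1
      have hs : ContinuousAt (fun r : ℝ × ℝ => Real.tan (r.2/2)) q := by
        have h1 : ContinuousAt (fun r : ℝ × ℝ => r.2/2) q := (continuous_snd.div_const 2).continuousAt
        exact ContinuousAt.comp (g := Real.tan) (f := fun r : ℝ × ℝ => r.2/2) (x := q) (Real.continuousAt_tan.mpr (stmt2_cos_ne q.2 hq.2)) h1
      exact continuousAt_const.mul (ht.mul hs)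
    have hSopen : IsOpen S := (isOpen_Ioo).prod (isOpen_Ioo)
    set U : Set (ℝ × ℝ) := S ∩ g ⁻¹' (Set.Ioi 0) with hUdef
    have hUopen : IsOpen U := by
      refine ContinuousOn.isOpen_inter_preimage ?_ hSopen isOpen_Ioi
      exact fun q hq => (hgcont q hq).continuousWithinAt
    have hpU : p ∈ U := ⟨hp, hcpos⟩
    -- local expressions
    set f1 : ℝ × ℝ → ℝ := fun q => 2 * Real.tan (q.1/2) * (1 + Real.tan (q.2/2) * Real.tan (q.2/2)) *
      ((1 + c * (Real.tan (q.1/2) * Real.tan (q.2/2))) * (1 + c * (Real.tan (q.1/2) * Real.tan (q.2/2))))⁻¹ with hf1def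
    set f2 : ℝ × ℝ → ℝ := fun q => -(2 * Real.tan (q.2/2) * (1 + Real.tan (q.1/2) * Real.tan (q.1/2)) *
      ((1 + c * (Real.tan (q.1/2) * Real.tan (q.2/2))) * (1 + c * (Real.tan (q.1/2) * Real.tan (q.2/2))))⁻¹) with hf2def
    -- equality on U
    have hkey : ∀ q ∈ U, A q * Real.sin q.1 = f1 q ∧ A q * (-Real.sin q.2) = f2 q := by
      intro q hqU
      obtain ⟨hqS, hq⟩ := hqU
      have hq' : 0 < c * (Real.tan (q.1/2) * Real.tan (q.2/2)) := hq
      have hcq1 := stmt2_cos_ne q.1 hqS.1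
      have hcq2 := stmt2_cos_ne q.2 hqS.2
      have habs : |Real.tan (q.1/2)| * |Real.tan (q.2/2)| = c * (Real.tan (q.1/2) * Real.tan (q.2/2)) := by
        rw [← abs_mul]; exact stmt2_abs_eq_c hc1 hq'
      have hsin1 := stmt2_sin_eq q.1 hcq1
      have hsin2 := stmt2_sin_eq q.2 hcq2
      have hDq : (1:ℝ) + c * (Real.tan (q.1/2) * Real.tan (q.2/2)) ≠ 0 := by
        rw [← habs]; positivity
      have h1q : (1:ℝ) + Real.tan (q.1/2)^2 ≠ 0 := by positivity
      have h2q : (1:ℝ) + Real.tan (q.2/2)^2 ≠ 0 := by positivity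
      constructor
      · simp only [hA, hf1def]
        rw [habs, hsin1]
        field_simp
      · simp only [hA, hf2def]
        rw [habs, hsin2]
        field_simp
    -- eventual equalities
    have hev1 : (fun q => σ q * pdx u q) =ᶠ[𝓝 p] f1 := by
      filter_upwards [hUopen.mem_nhds hpU] with q hq
      have h1 : pdx u q = Real.sin q.1 := by
        simp only [pdx, hudef]; exact stmt2_pdxu q
      rw [h1, hσA]
      exact (hkey q hq).1
    have hev2 : (fun q => σ q * pdy u q) =ᶠ[𝓝 p] f2 := by
      filter_upwards [hUopen.mem_nhds hpU] with q hq
      have h1 : pdy u q = -Real.sin q.2 := by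
        simp only [pdy, hudef]; exact stmt2_pdyu q
      rw [h1, hσA]
      exact (hkey q hq).2
    -- derivatives of f1, f2 at p
    have hDp : (1:ℝ) + c * (Real.tan (p.1/2) * Real.tan (p.2/2)) ≠ 0 := by linarith [hcpos]
    have hx' : HasDerivAt (fun a : ℝ => Real.tan (a/2)) (1 / Real.cos (p.1/2)^2 * (1/2)) p.1 :=
      by
        have h : HasDerivAt (Real.tan ∘ fun a : ℝ => a / 2) (1 / Real.cos (p.1/2)^2 * (1/2)) p.1 :=
          (Real.hasDerivAt_tan hca).comp p.1 ((hasDerivAt_id' p.1).div_const 2)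
        exact h
    have hT : HasFDerivAt (fun q : ℝ × ℝ => Real.tan (q.1/2))
        ((1 / Real.cos (p.1/2)^2 * (1/2)) • (ContinuousLinearMap.fst ℝ ℝ ℝ)) p :=
      hx'.comp_hasFDerivAt p hasFDerivAt_fst
    have hy' : HasDerivAt (fun a : ℝ => Real.tan (a/2)) (1 / Real.cos (p.2/2)^2 * (1/2)) p.2 :=
      by
        have h : HasDerivAt (Real.tan ∘ fun a : ℝ => a / 2) (1 / Real.cos (p.2/2)^2 * (1/2)) p.2 :=
          (Real.hasDerivAt_tan hcb).comp p.2 ((hasDerivAt_id' p.2).div_const 2)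
        exact h
    have hS : HasFDerivAt (fun q : ℝ × ℝ => Real.tan (q.2/2))
        ((1 / Real.cos (p.2/2)^2 * (1/2)) • (ContinuousLinearMap.snd ℝ ℝ ℝ)) p :=
      hy'.comp_hasFDerivAt p hasFDerivAt_snd
    have hden0 := ((hT.mul hS).const_mul c).const_add 1
    have hinv := (hasDerivAt_inv (mul_ne_zero hDp hDp)).comp_hasFDerivAt p (hden0.mul hden0)
    simp only [Function.comp_def] at hinv
    have hf1' := ((hT.const_mul (2:ℝ)).mul ((hS.mul hS).const_add 1)).mul hinv
    have hf2' := (((hS.const_mul (2:ℝ)).mul ((hT.mul hT).const_add 1)).mul hinv).neg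
    replace hf1' : HasFDerivAt f1 _ p := hf1'
    replace hf2' : HasFDerivAt f2 _ p := hf2'
    show fderiv ℝ (fun q => σ q * pdx u q) p (1, 0) + fderiv ℝ (fun q => σ q * pdy u q) p (0, 1) = 0
    rw [hev1.fderiv_eq, hev2.fderiv_eq, hf1'.fderiv, hf2'.fderiv]
    have hia : (Real.cos (p.1/2)^2)⁻¹ = 1 + Real.tan (p.1/2)^2 := by
      rw [← Real.inv_one_add_tan_sq hca, inv_inv]
    have hib : (Real.cos (p.2/2)^2)⁻¹ = 1 + Real.tan (p.2/2)^2 := by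
      rw [← Real.inv_one_add_tan_sq hcb, inv_inv]
    simp
    simp only [hia, hib]
    field_simp
    ring
end

section
/- Let u(x,y) = (y³ − x³)/3 and Ω = (0,1) × (−1,0). There is no positive function σ ∈ C¹(Ω) ∩ L^∞(Ω) with div(σ∇u) = 0 in Ω. -/
open ContinuousLinearMap in
lemma hasFDerivAt_u4 (q : ℝ × ℝ) :
    HasFDerivAt (fun p : ℝ × ℝ => (p.2 ^ 3 - p.1 ^ 3) / 3)
      ((q.2 ^ 2) • (snd ℝ ℝ ℝ) - (q.1 ^ 2) • (fst ℝ ℝ ℝ)) q := by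
  have h1 : HasFDerivAt (fun p : ℝ × ℝ => p.1) (fst ℝ ℝ ℝ) q := hasFDerivAt_fst
  have h2 : HasFDerivAt (fun p : ℝ × ℝ => p.2) (snd ℝ ℝ ℝ) q := hasFDerivAt_snd
  have h1c : HasFDerivAt (fun p : ℝ × ℝ => p.1 * (p.1 * p.1)) _ q := h1.fun_mul (h1.fun_mul h1)
  have h2c : HasFDerivAt (fun p : ℝ × ℝ => p.2 * (p.2 * p.2)) _ q := h2.fun_mul (h2.fun_mul h2)
  have := (h2c.sub h1c).mul_const (3⁻¹:ℝ)
  have heq : (fun p : ℝ × ℝ => (p.2 ^ 3 - p.1 ^ 3) / 3)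
      = fun p : ℝ × ℝ => (p.2 * (p.2 * p.2) - p.1 * (p.1 * p.1)) * 3⁻¹ := by
    funext p; ring
  rw [heq]
  refine this.congr_fderiv ?_
  refine ContinuousLinearMap.ext fun v => ?_
  simp
  ring

open ContinuousLinearMap in
lemma hasFDerivAt_negsq (q : ℝ × ℝ) :
    HasFDerivAt (fun p : ℝ × ℝ => -p.1 ^ 2) ((-(2 * q.1)) • (fst ℝ ℝ ℝ)) q := by
  have h1 : HasFDerivAt (fun p : ℝ × ℝ => p.1) (fst ℝ ℝ ℝ) q := hasFDerivAt_fst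
  have := (h1.fun_mul h1).neg
  have heq : (fun p : ℝ × ℝ => -p.1 ^ 2) = fun p : ℝ × ℝ => -(p.1 * p.1) := by
    funext p; ring
  rw [heq]
  refine this.congr_fderiv ?_
  refine ContinuousLinearMap.ext fun v => ?_
  simp; ring

open ContinuousLinearMap in
lemma hasFDerivAt_sq2 (q : ℝ × ℝ) :
    HasFDerivAt (fun p : ℝ × ℝ => p.2 ^ 2) ((2 * q.2) • (snd ℝ ℝ ℝ)) q := by
  have h2 : HasFDerivAt (fun p : ℝ × ℝ => p.2) (snd ℝ ℝ ℝ) q := hasFDerivAt_snd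
  have := h2.fun_mul h2
  have heq : (fun p : ℝ × ℝ => p.2 ^ 2) = fun p : ℝ × ℝ => p.2 * p.2 := by
    funext p; ring
  rw [heq]
  refine this.congr_fderiv ?_
  refine ContinuousLinearMap.ext fun v => ?_
  simp; ring

/-- for u(x,y) = (y³−x³)/3 on Ω = (0,1)×(−1,0), there is no positive bounded
C¹ conductivity σ on Ω with div(σ∇u) = 0 in Ω. -/
theorem stmt4 :
    let u : ℝ × ℝ → ℝ := fun p => (p.2 ^ 3 - p.1 ^ 3) / 3
    let Ω : Set (ℝ × ℝ) := Set.Ioo (0:ℝ) 1 ×ˢ Set.Ioo (-1:ℝ) 0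
    ¬ ∃ σ : ℝ × ℝ → ℝ, (∀ p ∈ Ω, 0 < σ p) ∧ ContDiffOn ℝ 1 σ Ω ∧
      (∃ C : ℝ, ∀ p ∈ Ω, σ p ≤ C) ∧
      (∀ p ∈ Ω, pdx (fun q => σ q * pdx u q) p + pdy (fun q => σ q * pdy u q) p = 0) := by
  intro u Ω
  rintro ⟨σ, hpos, hC1, ⟨C, hC⟩, hdiv⟩
  have hΩ : IsOpen Ω := isOpen_Ioo.prod isOpen_Ioo
  -- differentiability of σ on Ω
  have hdσ : ∀ p ∈ Ω, DifferentiableAt ℝ σ p := fun p hp =>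
    (hC1.contDiffAt (hΩ.mem_nhds hp)).differentiableAt one_ne_zero
  -- partial derivatives of u
  have hux : (fun q => pdx u q) = fun q : ℝ × ℝ => -q.1 ^ 2 := by
    funext q
    show fderiv ℝ u q (1, 0) = _
    rw [(hasFDerivAt_u4 q).fderiv]
    simp
  have huy : (fun q => pdy u q) = fun q : ℝ × ℝ => q.2 ^ 2 := by
    funext q
    show fderiv ℝ u q (0, 1) = _
    rw [(hasFDerivAt_u4 q).fderiv]
    simp
  -- the key pointwise identity from the PDE
  have key : ∀ p ∈ Ω, fderiv ℝ σ p (-p.1 ^ 2, p.2 ^ 2) = 2 * p.1 * σ p - 2 * p.2 * σ p := by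
    intro p hp
    have hσp := hdσ p hp
    have h1 := hσp.hasFDerivAt.fun_mul (hasFDerivAt_negsq p)
    have h2 := hσp.hasFDerivAt.fun_mul (hasFDerivAt_sq2 p)
    have hd := hdiv p hp
    rw [show (fun q => σ q * pdx u q) = fun q : ℝ × ℝ => σ q * (-q.1 ^ 2) by
          funext q; rw [show pdx u q = -q.1 ^ 2 from congrFun hux q],
        show (fun q => σ q * pdy u q) = fun q : ℝ × ℝ => σ q * q.2 ^ 2 by
          funext q; rw [show pdy u q = q.2 ^ 2 from congrFun huy q]] at hd
    unfold pdx pdy at hd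
    rw [h1.fderiv, h2.fderiv] at hd
    simp only [ContinuousLinearMap.add_apply, ContinuousLinearMap.smul_apply,
      ContinuousLinearMap.coe_fst', ContinuousLinearMap.coe_snd', smul_eq_mul] at hd
    have hlin : fderiv ℝ σ p (-p.1 ^ 2, p.2 ^ 2)
        = (-p.1 ^ 2) * fderiv ℝ σ p (1, 0) + (p.2 ^ 2) * fderiv ℝ σ p (0, 1) := by
      have : ((-p.1 ^ 2 : ℝ), (p.2 ^ 2 : ℝ))
          = (-p.1 ^ 2) • ((1:ℝ), (0:ℝ)) + (p.2 ^ 2) • ((0:ℝ), (1:ℝ)) := by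
        simp
      rw [this, map_add, map_smul, map_smul, smul_eq_mul, smul_eq_mul]
    rw [hlin]
    nlinarith [hd]
  -- the flow curve
  set c : ℝ → ℝ × ℝ := fun t => (1 / (t + 2), -(1 / (t + 2))) with hc
  have hmem : ∀ t : ℝ, 0 ≤ t → c t ∈ Ω := by
    intro t ht
    have h2 : (0:ℝ) < t + 2 := by linarith
    have h3 : 1 / (t + 2) < 1 := by
      rw [div_lt_one h2]; linarith
    have h4 : 0 < 1 / (t + 2) := by positivity
    simp only [hc, Set.mem_prod, Set.mem_Ioo]
    refine ⟨⟨h4, h3⟩, by linarith, by linarith⟩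
  -- derivative of σ ∘ c
  have hderiv : ∀ t : ℝ, 0 ≤ t →
      HasDerivAt (fun s => σ (c s)) (4 / (t + 2) * σ (c t)) t := by
    intro t ht
    have h2 : (t:ℝ) + 2 ≠ 0 := by linarith
    have hcd : HasDerivAt c (-(1 / (t + 2) ^ 2), 1 / (t + 2) ^ 2) t := by
      have hb : HasDerivAt (fun s : ℝ => s + 2) 1 t := (hasDerivAt_id t).add_const 2
      have hinv : HasDerivAt (fun s : ℝ => (s + 2)⁻¹) (-1 / (t + 2) ^ 2) t := by
        have := hb.fun_inv h2
        simpa using this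
      have h1 : HasDerivAt (fun s : ℝ => 1 / (s + 2)) (-(1 / (t + 2) ^ 2)) t := by
        simpa [one_div, neg_div] using hinv
      have hp := h1.prodMk h1.fun_neg
      convert hp using 1
      rw [Prod.mk.injEq]
      constructor <;> ring
    have hσc := (hdσ (c t) (hmem t ht)).hasFDerivAt.comp_hasDerivAt t hcd
    have hpt : ((-(1 / (t + 2) ^ 2) : ℝ), (1 / (t + 2) ^ 2 : ℝ))
        = (-(c t).1 ^ 2, ((c t).2) ^ 2) := by
      simp only [hc]
      rw [Prod.mk.injEq]
      constructor <;> (field_simp)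
    rw [hpt] at hσc
    have hval := key (c t) (hmem t ht)
    rw [hval] at hσc
    have : 2 * (c t).1 * σ (c t) - 2 * (c t).2 * σ (c t) = 4 / (t + 2) * σ (c t) := by
      simp only [hc]
      field_simp
      ring
    rw [this] at hσc
    exact hσc
  -- the rescaled function is constant
  set G : ℝ → ℝ := fun t => σ (c t) / (t + 2) ^ 4 with hG
  have hGd : ∀ t : ℝ, 0 ≤ t → HasDerivAt G 0 t := by
    intro t ht
    have h2 : (t:ℝ) + 2 ≠ 0 := by linarith
    have hden : HasDerivAt (fun s : ℝ => (s + 2) ^ 4) (4 * (t + 2) ^ 3) t := by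
      have hb : HasDerivAt (fun s : ℝ => s + 2) 1 t := (hasDerivAt_id t).add_const 2
      have := hb.fun_pow 4
      simpa using this
    have := (hderiv t ht).div hden (by positivity)
    refine this.congr_deriv ?_
    field_simp
    ring
  have hconst : ∀ T : ℝ, 0 ≤ T → G T = G 0 := by
    intro T hT
    have := constant_of_has_deriv_right_zero (f := G) (a := 0) (b := T)
      (fun t ht => ((hGd t ht.1).continuousAt.continuousWithinAt))
      (fun t ht => (hGd t ht.1).hasDerivWithinAt)
    exact this T ⟨hT, le_rfl⟩
  -- contradiction
  have h0 : c 0 ∈ Ω := hmem 0 le_rfl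
  set σ0 : ℝ := σ (c 0) with hσ0
  have hσ0pos : 0 < σ0 := hpos _ h0
  have hCσ0 : σ0 ≤ C := hC _ h0
  have hCpos : 0 < C := lt_of_lt_of_le hσ0pos hCσ0
  set T : ℝ := 16 * C / σ0 with hT
  have hTpos : 0 < T := by positivity
  have hGT := hconst T hTpos.le
  have hG0 : G 0 = σ0 / 16 := by
    simp only [hG, hσ0]
    norm_num
  have hσT : σ (c T) = σ0 * (T + 2) ^ 4 / 16 := by
    have h2 : ((T:ℝ) + 2) ^ 4 ≠ 0 := by positivity
    have : σ (c T) / (T + 2) ^ 4 = σ0 / 16 := by rw [← hG0]; exact hGT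
    field_simp at this
    linarith [this]
  have hle : σ (c T) ≤ C := hC _ (hmem T hTpos.le)
  rw [hσT] at hle
  have h16C : 16 * C = σ0 * T := by
    rw [hT]; field_simp
  nlinarith [sq_nonneg (T + 2), sq_nonneg T, sq_nonneg ((T+2)^2 - 1), hσ0pos, hTpos]
end

section
/- Let u(x,y) = (y³ − x³)/3 and Ω = (0,1)². Then σ₀(x,y) := 16 x² y² / (x+y)⁴ is a positive C¹ function on Ω, bounded above by 16, and satisfies div(σ₀ ∇u) = 0 in Ω. -/
private lemma hasFDerivAt_pow_aux {f : ℝ × ℝ → ℝ} {f' : ℝ × ℝ →L[ℝ] ℝ} {p : ℝ × ℝ}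
    (n : ℕ) (h : HasFDerivAt f f' p) :
    HasFDerivAt (fun q => f q ^ n) (((n : ℝ) * f p ^ (n - 1)) • f') p := by
  induction n with
  | zero => simpa using hasFDerivAt_const (1 : ℝ) p
  | succ n ih =>
    have h2 : HasFDerivAt (fun q => f q ^ n * f q) _ p := ih.mul h
    have hfun : (fun q => f q ^ (n + 1)) = fun q => f q ^ n * f q := by
      funext q; rw [pow_succ]
    rw [hfun]
    refine HasFDerivAt.congr_fderiv h2 ?_
    cases n with
    | zero => simp
    | succ m =>
      simp only [Nat.add_sub_cancel, smul_smul, ← add_smul]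
      congr 1
      push_cast
      ring

private lemma upartials (q : ℝ × ℝ) :
    pdx (fun p : ℝ × ℝ => (p.2 ^ 3 - p.1 ^ 3) / 3) q = -(q.1 ^ 2) ∧
    pdy (fun p : ℝ × ℝ => (p.2 ^ 3 - p.1 ^ 3) / 3) q = q.2 ^ 2 := by
  have h1 : HasFDerivAt (fun p : ℝ × ℝ => p.1) (ContinuousLinearMap.fst ℝ ℝ ℝ) q :=
    hasFDerivAt_fst
  have h2 : HasFDerivAt (fun p : ℝ × ℝ => p.2) (ContinuousLinearMap.snd ℝ ℝ ℝ) q :=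
    hasFDerivAt_snd
  have hrw : (fun p : ℝ × ℝ => (p.2 ^ 3 - p.1 ^ 3) / 3)
      = fun p : ℝ × ℝ => (p.2 ^ 3 - p.1 ^ 3) * (3:ℝ)⁻¹ := by
    funext p; ring
  have H : HasFDerivAt (fun p : ℝ × ℝ => (p.2 ^ 3 - p.1 ^ 3) * (3:ℝ)⁻¹) _ q := ((hasFDerivAt_pow_aux 3 h2).sub (hasFDerivAt_pow_aux 3 h1)).mul_const (3:ℝ)⁻¹
  rw [hrw]
  have hf := H.fderiv
  constructor
  · rw [pdx, hf]; simp
  · rw [pdy, hf]; simp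

/-- for u(x,y) = (y³−x³)/3 on Ω = (0,1)², the conductivity
σ₀(x,y) = 16x²y²/(x+y)⁴ is positive, bounded by 16, C¹ on Ω and div(σ₀∇u) = 0 in Ω. -/
theorem stmt5 :
    let u : ℝ × ℝ → ℝ := fun p => (p.2 ^ 3 - p.1 ^ 3) / 3
    let σ₀ : ℝ × ℝ → ℝ := fun p => 16 * p.1 ^ 2 * p.2 ^ 2 / (p.1 + p.2) ^ 4
    let Ω : Set (ℝ × ℝ) := Set.Ioo (0:ℝ) 1 ×ˢ Set.Ioo (0:ℝ) 1
    (∀ p ∈ Ω, 0 < σ₀ p ∧ σ₀ p ≤ 16) ∧ ContDiffOn ℝ 1 σ₀ Ω ∧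
    (∀ p ∈ Ω, pdx (fun q => σ₀ q * pdx u q) p + pdy (fun q => σ₀ q * pdy u q) p = 0) := by
  intro u σ₀ Ω
  have hne : ∀ p ∈ Ω, p.1 + p.2 ≠ 0 := by
    rintro p ⟨⟨hx, _⟩, ⟨hy, _⟩⟩
    positivity
  refine ⟨?_, ?_, ?_⟩
  · rintro p ⟨⟨hx, hx1⟩, ⟨hy, hy1⟩⟩
    constructor
    · have : (0:ℝ) < p.1 + p.2 := by linarith
      positivity
    · rw [div_le_iff₀ (by positivity)]
      nlinarith [sq_nonneg (p.1 - p.2), sq_nonneg (p.1 + p.2), sq_nonneg (p.1*p.2),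
        mul_pos hx hy, sq_nonneg ((p.1+p.2)^2 - p.1*p.2)]
  · apply ContDiffOn.div
    · exact (ContDiff.contDiffOn (by fun_prop))
    · exact (ContDiff.contDiffOn (by fun_prop))
    · intro p hp
      exact pow_ne_zero 4 (hne p hp)
  · rintro p hp
    obtain ⟨⟨hx, hx1⟩, ⟨hy, hy1⟩⟩ := hp
    have hs : p.1 + p.2 ≠ 0 := by positivity
    -- rewrite the integrands using the explicit partials of u
    have hFx : (fun q => σ₀ q * pdx u q) = fun q : ℝ × ℝ =>
        16 * q.1 ^ 2 * q.2 ^ 2 * ((q.1 + q.2) ^ 4)⁻¹ * -(q.1 ^ 2) := by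
      funext q; rw [(upartials q).1]; ring
    have hFy : (fun q => σ₀ q * pdy u q) = fun q : ℝ × ℝ =>
        16 * q.1 ^ 2 * q.2 ^ 2 * ((q.1 + q.2) ^ 4)⁻¹ * q.2 ^ 2 := by
      funext q; rw [(upartials q).2]; ring
    rw [hFx, hFy]
    have h1 : HasFDerivAt (fun q : ℝ × ℝ => q.1) (ContinuousLinearMap.fst ℝ ℝ ℝ) p :=
      hasFDerivAt_fst
    have h2 : HasFDerivAt (fun q : ℝ × ℝ => q.2) (ContinuousLinearMap.snd ℝ ℝ ℝ) p :=
      hasFDerivAt_snd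
    have hx2 := hasFDerivAt_pow_aux 2 h1
    have hy2 := hasFDerivAt_pow_aux 2 h2
    have hnum := (hx2.const_mul (16:ℝ)).mul hy2
    have hden := hasFDerivAt_pow_aux 4 (h1.add h2)
    have hinv := (hasDerivAt_inv (pow_ne_zero 4 hs)).comp_hasFDerivAt p hden
    simp only [Function.comp_def] at hinv
    have hσ := hnum.mul hinv
    have HF : HasFDerivAt (fun q : ℝ × ℝ =>
        16 * q.1 ^ 2 * q.2 ^ 2 * ((q.1 + q.2) ^ 4)⁻¹ * -(q.1 ^ 2)) _ p := hσ.mul hx2.neg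
    have HG : HasFDerivAt (fun q : ℝ × ℝ =>
        16 * q.1 ^ 2 * q.2 ^ 2 * ((q.1 + q.2) ^ 4)⁻¹ * q.2 ^ 2) _ p := hσ.mul hy2
    rw [pdx, pdy, HF.fderiv, HG.fderiv]
    simp only [ContinuousLinearMap.add_apply, ContinuousLinearMap.smul_apply,
      ContinuousLinearMap.sub_apply, ContinuousLinearMap.neg_apply,
      ContinuousLinearMap.coe_fst', ContinuousLinearMap.coe_snd',
      smul_eq_mul, Pi.add_apply, Pi.mul_apply, Pi.neg_apply]
    field_simp
    ring
end

section
/- Let u(x,y) = (y³ − x³)/3 and Ω = (0,1)². There is no positive function σ ∈ C¹(Ω) with both σ ∈ L^∞(Ω) and σ⁻¹ ∈ L^∞(Ω) such that div(σ∇u) = 0 in Ω. -/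
open Set
set_option maxHeartbeats 1000000

lemma hasFDerivAt_u (p : ℝ × ℝ) :
    HasFDerivAt (fun p : ℝ × ℝ => (p.2 ^ 3 - p.1 ^ 3) / 3)
      ((p.2 ^ 2) • ContinuousLinearMap.snd ℝ ℝ ℝ - (p.1 ^ 2) • ContinuousLinearMap.fst ℝ ℝ ℝ) p := by
  have h1 : HasFDerivAt (fun p : ℝ × ℝ => p.1) (ContinuousLinearMap.fst ℝ ℝ ℝ) p := hasFDerivAt_fst
  have h2 : HasFDerivAt (fun p : ℝ × ℝ => p.2) (ContinuousLinearMap.snd ℝ ℝ ℝ) p := hasFDerivAt_snd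
  have h := (((h2.mul h2).mul h2).sub ((h1.mul h1).mul h1)).const_mul ((1:ℝ)/3)
  have he : (fun p : ℝ × ℝ => (p.2 ^ 3 - p.1 ^ 3) / 3)
      = fun p : ℝ × ℝ => (1/3 : ℝ) * (p.2 * p.2 * p.2 - p.1 * p.1 * p.1) := by funext q; ring
  rw [he]
  refine h.congr_fderiv ?_
  ext v <;> simp <;> ring

lemma pdx_u (p : ℝ × ℝ) : pdx (fun p : ℝ × ℝ => (p.2 ^ 3 - p.1 ^ 3) / 3) p = -p.1 ^ 2 := by
  rw [pdx, (hasFDerivAt_u p).fderiv]; simp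

lemma pdy_u (p : ℝ × ℝ) : pdy (fun p : ℝ × ℝ => (p.2 ^ 3 - p.1 ^ 3) / 3) p = p.2 ^ 2 := by
  rw [pdy, (hasFDerivAt_u p).fderiv]; simp


lemma key_identity (σ : ℝ × ℝ → ℝ)
    (hσ : ContDiffOn ℝ 1 σ (Set.Ioo (0:ℝ) 1 ×ˢ Set.Ioo (0:ℝ) 1))
    (hpde : ∀ p ∈ Set.Ioo (0:ℝ) 1 ×ˢ Set.Ioo (0:ℝ) 1,
      pdx (fun q => σ q * pdx (fun p : ℝ × ℝ => (p.2 ^ 3 - p.1 ^ 3) / 3) q) p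
      + pdy (fun q => σ q * pdy (fun p : ℝ × ℝ => (p.2 ^ 3 - p.1 ^ 3) / 3) q) p = 0)
    {p : ℝ × ℝ} (hp : p ∈ Set.Ioo (0:ℝ) 1 ×ˢ Set.Ioo (0:ℝ) 1) :
    fderiv ℝ σ p (-p.1 ^ 2, p.2 ^ 2) = (2 * p.1 - 2 * p.2) * σ p := by
  have hΩ : IsOpen (Set.Ioo (0:ℝ) 1 ×ˢ Set.Ioo (0:ℝ) 1) := isOpen_Ioo.prod isOpen_Ioo
  have hd : DifferentiableAt ℝ σ p :=
    ((hσ.differentiableOn one_ne_zero).differentiableAt (hΩ.mem_nhds hp))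
  have hD : HasFDerivAt σ (fderiv ℝ σ p) p := hd.hasFDerivAt
  set D := fderiv ℝ σ p with hDdef
  -- derivative of q ↦ -q.1^2 and q ↦ q.2^2
  have h1 : HasFDerivAt (fun q : ℝ × ℝ => -q.1 ^ 2)
      ((-(2 * p.1)) • ContinuousLinearMap.fst ℝ ℝ ℝ) p := by
    have := ((hasFDerivAt_fst (𝕜 := ℝ) (p := p) (E := ℝ) (F := ℝ)).mul
      (hasFDerivAt_fst (𝕜 := ℝ) (p := p))).neg
    have he : (fun q : ℝ × ℝ => -q.1 ^ 2) = fun q : ℝ × ℝ => -(q.1 * q.1) := by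
      funext q; ring
    rw [he]
    refine this.congr_fderiv ?_
    ext <;> simp <;> ring
  have h2 : HasFDerivAt (fun q : ℝ × ℝ => q.2 ^ 2)
      ((2 * p.2) • ContinuousLinearMap.snd ℝ ℝ ℝ) p := by
    have := (hasFDerivAt_snd (𝕜 := ℝ) (p := p) (E := ℝ) (F := ℝ)).mul
      (hasFDerivAt_snd (𝕜 := ℝ) (p := p))
    have he : (fun q : ℝ × ℝ => q.2 ^ 2) = fun q : ℝ × ℝ => q.2 * q.2 := by
      funext q; ring
    rw [he]
    refine this.congr_fderiv ?_
    ext <;> simp <;> ring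
  have hm1 : HasFDerivAt (fun q : ℝ × ℝ => σ q * (-q.1 ^ 2))
      (σ p • ((-(2 * p.1)) • ContinuousLinearMap.fst ℝ ℝ ℝ) + (-p.1 ^ 2) • D) p := hD.mul h1
  have hm2 : HasFDerivAt (fun q : ℝ × ℝ => σ q * q.2 ^ 2)
      (σ p • ((2 * p.2) • ContinuousLinearMap.snd ℝ ℝ ℝ) + (p.2 ^ 2) • D) p := hD.mul h2
  have e1 : (fun q : ℝ × ℝ => σ q * pdx (fun p : ℝ × ℝ => (p.2 ^ 3 - p.1 ^ 3) / 3) q)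
      = fun q : ℝ × ℝ => σ q * (-q.1 ^ 2) := by
    funext q; rw [pdx_u]
  have e2 : (fun q : ℝ × ℝ => σ q * pdy (fun p : ℝ × ℝ => (p.2 ^ 3 - p.1 ^ 3) / 3) q)
      = fun q : ℝ × ℝ => σ q * q.2 ^ 2 := by
    funext q; rw [pdy_u]
  have hp' := hpde p hp
  rw [e1, e2, pdx, pdy, hm1.fderiv, hm2.fderiv] at hp'
  simp only [ContinuousLinearMap.add_apply, ContinuousLinearMap.smul_apply,
    ContinuousLinearMap.coe_fst', ContinuousLinearMap.coe_snd', smul_eq_mul] at hp'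
  have hdecomp : ((-p.1 ^ 2 : ℝ), (p.2 ^ 2 : ℝ))
      = (-p.1 ^ 2 : ℝ) • ((1:ℝ), (0:ℝ)) + (p.2 ^ 2 : ℝ) • ((0:ℝ), (1:ℝ)) := by
    simp
  rw [hdecomp, map_add, map_smul, map_smul, smul_eq_mul, smul_eq_mul]
  nlinarith [hp']

lemma transport (σ : ℝ × ℝ → ℝ)
    (hσ : ContDiffOn ℝ 1 σ (Set.Ioo (0:ℝ) 1 ×ˢ Set.Ioo (0:ℝ) 1))
    (hkey : ∀ p ∈ Set.Ioo (0:ℝ) 1 ×ˢ Set.Ioo (0:ℝ) 1,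
      fderiv ℝ σ p (-p.1 ^ 2, p.2 ^ 2) = (2 * p.1 - 2 * p.2) * σ p)
    (x0 y0 : ℝ) (hx0 : 0 < x0) (hx2 : x0 ≤ 1/2) (hxy : x0 < y0) (hy1 : y0 < 1) :
    σ (2*x0*y0/(x0+y0), 2*x0*y0/(x0+y0)) * (16*x0^2*y0^2) = σ (x0, y0) * (x0+y0)^4 := by
  have hΩ : IsOpen (Set.Ioo (0:ℝ) 1 ×ˢ Set.Ioo (0:ℝ) 1) := isOpen_Ioo.prod isOpen_Ioo
  have hy0 : 0 < y0 := hx0.trans hxy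
  set a : ℝ := (x0 - 1) / x0 with ha
  set b : ℝ := (1 - y0) / y0 with hb
  set τ : ℝ := (x0 - y0) / (2 * x0 * y0) with hτ
  have haτ : a < τ := by
    rw [ha, hτ, div_lt_div_iff₀ hx0 (by positivity)]
    nlinarith [mul_pos hx0 (show 0 < x0 + y0 - 2*x0*y0 by
      nlinarith [mul_nonneg hy0.le (show (0:ℝ) ≤ 1 - 2*x0 by linarith)])]
  have hτ0 : τ < 0 := by
    rw [hτ]; apply div_neg_of_neg_of_pos <;> nlinarith
  have hb0 : 0 < b := by exact div_pos (by linarith) hy0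
  -- membership facts for s ∈ Ioo a b
  have hmem : ∀ s ∈ Ioo a b, (0 < 1 + x0 * s ∧ 0 < 1 - y0 * s) ∧
      (x0 / (1 + x0 * s), y0 / (1 - y0 * s)) ∈ Set.Ioo (0:ℝ) 1 ×ˢ Set.Ioo (0:ℝ) 1 := by
    intro s hs
    obtain ⟨hs1, hs2⟩ := hs
    rw [ha, div_lt_iff₀ hx0] at hs1
    rw [hb, lt_div_iff₀ hy0] at hs2
    have h1 : x0 < 1 + x0 * s := by nlinarith
    have h2 : y0 < 1 - y0 * s := by nlinarith
    have h1' : 0 < 1 + x0 * s := lt_trans hx0 h1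
    have h2' : 0 < 1 - y0 * s := lt_trans hy0 h2
    refine ⟨⟨h1', h2'⟩, ⟨⟨by positivity, ?_⟩, ⟨by positivity, ?_⟩⟩⟩
    · rw [div_lt_one h1']; linarith
    · rw [div_lt_one h2']; linarith
  -- the transported quantity
  set F : ℝ → ℝ := fun s =>
    σ (x0 / (1 + x0 * s), y0 / (1 - y0 * s)) * ((1 + x0 * s) ^ 2 * (1 - y0 * s) ^ 2)⁻¹ with hF
  have hderiv : ∀ s ∈ Ioo a b, HasDerivAt F 0 s := by
    intro s hs
    obtain ⟨⟨h1', h2'⟩, hXmem⟩ := hmem s hs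
    have hl1 : HasDerivAt (fun s : ℝ => 1 + x0 * s) x0 s := by
      simpa using ((hasDerivAt_id s).const_mul x0).const_add 1
    have hl2 : HasDerivAt (fun s : ℝ => 1 - y0 * s) (-y0) s := by
      exact (((hasDerivAt_id s).const_mul y0).const_sub 1).congr_deriv (by ring)
    set xs : ℝ := x0 / (1 + x0 * s) with hxs
    set ys : ℝ := y0 / (1 - y0 * s) with hys
    have hq1 : HasDerivAt (fun s : ℝ => x0 / (1 + x0 * s)) (-xs ^ 2) s := by
      have h := (hl1.inv (ne_of_gt h1')).const_mul x0
      simp only [div_eq_mul_inv]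
      refine h.congr_deriv ?_
      rw [hxs]; field_simp
    have hq2 : HasDerivAt (fun s : ℝ => y0 / (1 - y0 * s)) (ys ^ 2) s := by
      have h := (hl2.inv (ne_of_gt h2')).const_mul y0
      simp only [div_eq_mul_inv]
      refine h.congr_deriv ?_
      rw [hys]; field_simp
    have hX : HasDerivAt (fun s : ℝ => (x0 / (1 + x0 * s), y0 / (1 - y0 * s)))
        ((-xs ^ 2, ys ^ 2) : ℝ × ℝ) s := hq1.prodMk hq2
    have hdσ : DifferentiableAt ℝ σ (xs, ys) :=
      (hσ.differentiableOn one_ne_zero).differentiableAt (hΩ.mem_nhds hXmem)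
    have hval : fderiv ℝ σ (xs, ys) ((-xs ^ 2, ys ^ 2) : ℝ × ℝ)
        = (2 * xs - 2 * ys) * σ (xs, ys) := hkey (xs, ys) hXmem
    have hh : HasDerivAt (fun s : ℝ => σ (x0 / (1 + x0 * s), y0 / (1 - y0 * s)))
        ((2 * xs - 2 * ys) * σ (xs, ys)) s := by
      have := hdσ.hasFDerivAt.comp_hasDerivAt s hX
      rwa [hval] at this
    have hG : HasDerivAt (fun s : ℝ => (1 + x0 * s) ^ 2 * (1 - y0 * s) ^ 2)
        ((2 * xs - 2 * ys) * ((1 + x0 * s) ^ 2 * (1 - y0 * s) ^ 2)) s := by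
      have h := (hl1.pow 2).mul (hl2.pow 2)
      refine h.congr_deriv ?_
      simp only [Pi.pow_apply]
      have e1 : x0 / (1 + x0 * s) * (1 + x0 * s) = x0 := div_mul_cancel₀ _ (ne_of_gt h1')
      have e2 : y0 / (1 - y0 * s) * (1 - y0 * s) = y0 := div_mul_cancel₀ _ (ne_of_gt h2')
      rw [hxs, hys]; push_cast
      linear_combination (-(2 * (1 + x0 * s) * (1 - y0 * s) ^ 2)) * e1 + (2 * (1 + x0 * s) ^ 2 * (1 - y0 * s)) * e2
    have hGne : (1 + x0 * s) ^ 2 * (1 - y0 * s) ^ 2 ≠ 0 := by positivity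
    have h := hh.mul (hG.inv hGne)
    refine h.congr_deriv ?_
    simp only [Pi.inv_apply]
    rw [← hxs, ← hys]
    rw [eq_comm]
    field_simp
    ring
  -- F is constant on [τ, 0]
  have hsub : Icc τ 0 ⊆ Ioo a b := fun s hs => ⟨lt_of_lt_of_le haτ hs.1, lt_of_le_of_lt hs.2 hb0⟩
  have hcont : ContinuousOn F (Icc τ 0) := fun s hs =>
    ((hderiv s (hsub hs)).continuousAt).continuousWithinAt
  have hdz : ∀ x ∈ Ico τ 0, HasDerivWithinAt F 0 (Ici x) x := fun x hx =>
    (hderiv x (hsub ⟨hx.1, hx.2.le⟩)).hasDerivWithinAt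
  have hFeq : F 0 = F τ :=
    constant_of_has_deriv_right_zero hcont hdz 0 ⟨hτ0.le, le_refl 0⟩
  have hxyne : x0 + y0 ≠ 0 := by positivity
  have e1 : 1 + x0 * τ = (x0 + y0) / (2 * y0) := by
    rw [hτ]; field_simp; ring
  have e2 : 1 - y0 * τ = (x0 + y0) / (2 * x0) := by
    rw [hτ]; field_simp; ring
  have e3 : x0 / (1 + x0 * τ) = 2 * x0 * y0 / (x0 + y0) := by
    rw [e1]; field_simp
  have e4 : y0 / (1 - y0 * τ) = 2 * x0 * y0 / (x0 + y0) := by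
    rw [e2]; field_simp
  have hF0 : F 0 = σ (x0, y0) := by simp [hF]
  have hFτ : F τ = σ (2*x0*y0/(x0+y0), 2*x0*y0/(x0+y0))
      * (((x0 + y0) / (2 * y0)) ^ 2 * ((x0 + y0) / (2 * x0)) ^ 2)⁻¹ := by
    show σ (x0 / (1 + x0 * τ), y0 / (1 - y0 * τ)) * ((1 + x0 * τ) ^ 2 * (1 - y0 * τ) ^ 2)⁻¹ = _
    rw [e3, e4, e1, e2]
  rw [hF0, hFτ] at hFeq
  have hpow : (((x0 + y0) / (2 * y0)) ^ 2 * ((x0 + y0) / (2 * x0)) ^ 2) ≠ 0 := by positivity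
  field_simp at hFeq ⊢
  nlinarith [hFeq]


/-- for u(x,y) = (y³−x³)/3 on Ω = (0,1)², there is no positive C¹ conductivity
σ with σ and σ⁻¹ bounded on Ω such that div(σ∇u) = 0 in Ω. -/
theorem stmt6 :
    let u : ℝ × ℝ → ℝ := fun p => (p.2 ^ 3 - p.1 ^ 3) / 3
    let Ω : Set (ℝ × ℝ) := Set.Ioo (0:ℝ) 1 ×ˢ Set.Ioo (0:ℝ) 1
    ¬ ∃ σ : ℝ × ℝ → ℝ, (∀ p ∈ Ω, 0 < σ p) ∧ ContDiffOn ℝ 1 σ Ω ∧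
      (∃ C : ℝ, ∀ p ∈ Ω, σ p ≤ C) ∧ (∃ C' : ℝ, ∀ p ∈ Ω, (σ p)⁻¹ ≤ C') ∧
      (∀ p ∈ Ω, pdx (fun q => σ q * pdx u q) p + pdy (fun q => σ q * pdy u q) p = 0) := by
  intro u Ω
  rintro ⟨σ, hpos, hσ, ⟨C, hC⟩, ⟨C', hC'⟩, hpde⟩
  have hkey : ∀ p ∈ Set.Ioo (0:ℝ) 1 ×ˢ Set.Ioo (0:ℝ) 1,
      fderiv ℝ σ p (-p.1 ^ 2, p.2 ^ 2) = (2 * p.1 - 2 * p.2) * σ p :=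
    fun p hp => key_identity σ hσ hpde hp
  have hmid : ((1:ℝ)/2, (1:ℝ)/2) ∈ Ω := by constructor <;> constructor <;> norm_num
  have hCpos : 0 < C := lt_of_lt_of_le (hpos _ hmid) (hC _ hmid)
  have hC'pos : 0 < C' := lt_of_lt_of_le (inv_pos.mpr (hpos _ hmid)) (hC' _ hmid)
  set x0 : ℝ := min (1/4) ((8 * (C * C' + 1))⁻¹) with hx0def
  have hCC1 : 0 < C * C' + 1 := by positivity
  have hx0pos : 0 < x0 := lt_min (by norm_num) (by positivity)
  have hx0le : x0 ≤ 1/4 := min_le_left _ _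
  have hx0le2 : x0 ≤ (8 * (C * C' + 1))⁻¹ := min_le_right _ _
  have htr := transport σ hσ hkey x0 (1/2) hx0pos (by linarith) (by linarith) (by norm_num)
  set m : ℝ := 2 * x0 * (1/2) / (x0 + 1/2) with hm
  have hmpos : 0 < m := by rw [hm]; positivity
  have hmlt : m < 1 := by
    rw [hm, div_lt_one (by positivity)]; nlinarith
  have hmmem : (m, m) ∈ Ω := ⟨⟨hmpos, hmlt⟩, ⟨hmpos, hmlt⟩⟩
  have hx0mem : (x0, (1:ℝ)/2) ∈ Ω := ⟨⟨hx0pos, by linarith⟩, by norm_num⟩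
  have h1 : σ (m, m) ≤ C := hC _ hmmem
  have h2 : (C')⁻¹ ≤ σ (x0, 1/2) := by
    rw [inv_le_comm₀ hC'pos (hpos _ hx0mem)]
    exact hC' _ hx0mem
  -- from htr : σ (m, m) * (16 * x0^2 * (1/2)^2) = σ (x0, 1/2) * (x0 + 1/2)^4
  have hlb : (C')⁻¹ * (1/2)^4 ≤ σ (m, m) * (4 * x0 ^ 2) := by
    have h4 : ((1:ℝ)/2) ^ 4 ≤ (x0 + 1/2) ^ 4 := by
      apply pow_le_pow_left₀ (by norm_num); linarith
    calc (C')⁻¹ * (1/2)^4 ≤ σ (x0, 1/2) * (x0 + 1/2)^4 := by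
          apply mul_le_mul h2 h4 (by positivity)
          exact le_trans (by positivity) h2
      _ = σ (m, m) * (16 * x0 ^ 2 * (1/2) ^ 2) := htr.symm
      _ = σ (m, m) * (4 * x0 ^ 2) := by ring
  have hub : σ (m, m) * (4 * x0 ^ 2) ≤ C * (4 * x0 ^ 2) := by
    apply mul_le_mul_of_nonneg_right h1 (by positivity)
  -- so (C')⁻¹ / 16 ≤ 4 C x0², i.e. 1 ≤ 64 C C' x0²
  have hfinal : 1 ≤ 64 * C * C' * x0 ^ 2 := by
    have := le_trans hlb hub
    rw [inv_mul_le_iff₀ hC'pos] at this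
    nlinarith
  have hsmall : x0 ^ 2 ≤ (8 * (C * C' + 1))⁻¹ ^ 2 :=
    pow_le_pow_left₀ hx0pos.le hx0le2 2
  have : (8 * (C * C' + 1))⁻¹ ^ 2 = (64 * (C * C' + 1)^2)⁻¹ := by
    rw [inv_pow]; congr 1; ring
  rw [this] at hsmall
  have h64 : 64 * C * C' * (64 * (C * C' + 1) ^ 2)⁻¹ < 1 := by
    rw [mul_inv_lt_iff₀ (by positivity)]
    nlinarith
  nlinarith [mul_le_mul_of_nonneg_left hsmall (by positivity : (0:ℝ) ≤ 64 * C * C')]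
end

section
/- Let u₁,…,u_d : ℝ → ℝ be C² with each u_i' periodic and nowhere vanishing, and define u(x) = Σᵢ u_i(x_i) on ℝ^d. Then the conductivity σ(x) := |∏ᵢ u_i'(x_i)|⁻¹ is a positive, periodic, C¹ function on ℝ^d, bounded above and below by positive constants, and satisfies div(σ∇u) = 0 in ℝ^d. -/
lemma signConst {f : ℝ → ℝ} (hf : Continuous f) (h : ∀ s, f s ≠ 0) :
    ∃ e : ℝ, (e = 1 ∨ e = -1) ∧ ∀ t, |f t| = e * f t := by
  have key : ∀ a b : ℝ, 0 < f a → f b < 0 → False := by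
    intro a b ha hb
    rcases le_total a b with hab | hab
    · have : (0:ℝ) ∈ Set.Icc (f b) (f a) := ⟨hb.le, ha.le⟩
      obtain ⟨c, -, hc⟩ := intermediate_value_Icc' hab hf.continuousOn this
      exact h c hc
    · have : (0:ℝ) ∈ Set.Icc (f b) (f a) := ⟨hb.le, ha.le⟩
      obtain ⟨c, -, hc⟩ := intermediate_value_Icc hab hf.continuousOn this
      exact h c hc
  rcases lt_or_gt_of_ne (h 0) with h0 | h0
  · refine ⟨-1, Or.inr rfl, fun t => ?_⟩
    have ht : f t < 0 := by
      rcases lt_or_gt_of_ne (h t) with h' | h'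
      · exact h'
      · exact absurd (key t 0 h' h0) (by simp)
    rw [abs_of_neg ht]; ring
  · refine ⟨1, Or.inl rfl, fun t => ?_⟩
    have ht : 0 < f t := by
      rcases lt_or_gt_of_ne (h t) with h' | h'
      · exact absurd (key 0 t h0 h') (by simp)
      · exact h'
    rw [abs_of_pos ht]; ring

lemma perBound {f : ℝ → ℝ} {T : ℝ} (hf : Continuous f) (hT : 0 < T)
    (hp : Function.Periodic f T) (h0 : ∀ s, f s ≠ 0) :
    ∃ m M : ℝ, 0 < m ∧ ∀ s, m ≤ |f s| ∧ |f s| ≤ M := by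
  have hcont : ContinuousOn (fun s => |f s|) (Set.Icc 0 T) := (hf.abs).continuousOn
  have hne : (Set.Icc (0:ℝ) T).Nonempty := ⟨0, by simp [hT.le]⟩
  obtain ⟨a, haI, ha⟩ := isCompact_Icc.exists_isMinOn hne hcont
  obtain ⟨b, hbI, hb⟩ := isCompact_Icc.exists_isMaxOn hne hcont
  have hp' : Function.Periodic (fun s => |f s|) T := fun s => by simp [hp s]
  refine ⟨|f a|, |f b|, abs_pos.2 (h0 a), fun s => ?_⟩
  obtain ⟨y, hy, hey⟩ := hp'.exists_mem_Ico₀ hT s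
  have hyI : y ∈ Set.Icc (0:ℝ) T := ⟨hy.1, hy.2.le⟩
  exact ⟨hey ▸ ha hyI, hey ▸ hb hyI⟩

/-- for u(x) = Σᵢ uᵢ(xᵢ) with each uᵢ' periodic and nowhere vanishing,
σ(x) = |∏ᵢ uᵢ'(xᵢ)|⁻¹ is a positive, periodic, C¹ conductivity, bounded above and below
by positive constants, with div(σ∇u) = 0 in ℝ^d. -/
theorem stmt11 {d : ℕ} (u : Fin d → ℝ → ℝ) (T : Fin d → ℝ)
    (hu : ∀ i, ContDiff ℝ 2 (u i)) (hT : ∀ i, 0 < T i)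
    (hper : ∀ i, Function.Periodic (deriv (u i)) (T i))
    (hne : ∀ i s, deriv (u i) s ≠ 0) :
    let U : EuclideanSpace ℝ (Fin d) → ℝ := fun x => ∑ i, u i (x i)
    let σ : EuclideanSpace ℝ (Fin d) → ℝ := fun x => |∏ i, deriv (u i) (x i)|⁻¹
    (∀ x, 0 < σ x) ∧
    (∀ (i : Fin d) (x : EuclideanSpace ℝ (Fin d)),
      σ (x + EuclideanSpace.single i (T i)) = σ x) ∧
    ContDiff ℝ 1 σ ∧
    (∃ c C : ℝ, 0 < c ∧ ∀ x, c ≤ σ x ∧ σ x ≤ C) ∧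
    (∀ x, (∑ i, fderiv ℝ
        (fun y => σ y * fderiv ℝ U y (EuclideanSpace.single i 1)) x
        (EuclideanSpace.single i 1)) = 0) := by
  intro U σ
  -- basic facts
  have hD : ∀ i, ContDiff ℝ 1 (deriv (u i)) := by
    intro i
    have h2 : ContDiff ℝ (1 + 1) (u i) := by
      have h21 : ((1 : WithTop ℕ∞) + 1) = 2 := by norm_num
      rw [h21]; exact hu i
    exact (contDiff_succ_iff_deriv.mp h2).2.2
  have hPne : ∀ x : EuclideanSpace ℝ (Fin d), (∏ i, deriv (u i) (x i)) ≠ 0 :=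
    fun x => Finset.prod_ne_zero_iff.2 fun i _ => hne i (x i)
  have hpos : ∀ x, 0 < σ x := fun x => inv_pos.2 (abs_pos.2 (hPne x))
  -- factor differentiability
  have hfac : ∀ (j : Fin d), ContDiff ℝ 1 (fun y : EuclideanSpace ℝ (Fin d) => deriv (u j) (y j)) :=
    fun j => (hD j).comp (by have := (EuclideanSpace.proj (𝕜 := ℝ) (ι := Fin d) j).contDiff (n := 1); exact this)
  have hPcd : ContDiff ℝ 1 (fun x : EuclideanSpace ℝ (Fin d) => ∏ i, deriv (u i) (x i)) :=
    contDiff_prod fun i _ => hfac i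
  refine ⟨hpos, ?_, ?_, ?_, ?_⟩
  · -- periodicity
    intro i x
    have : (∏ j, deriv (u j) ((x + EuclideanSpace.single i (T i)) j))
        = ∏ j, deriv (u j) (x j) := by
      refine Finset.prod_congr rfl fun j _ => ?_
      have hxj : (x + EuclideanSpace.single i (T i)) j = x j + (if j = i then T i else 0) := by
        simp [EuclideanSpace.single_apply]
      by_cases hji : j = i
      · subst hji
        rw [hxj, if_pos rfl]
        exact hper j (x j)
      · rw [hxj, if_neg hji, add_zero]
    simp only [σ, this]
  · -- C¹
    rw [contDiff_iff_contDiffAt]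
    intro x
    exact ((hPcd.contDiffAt.abs (hPne x)).inv (abs_ne_zero.2 (hPne x)))
  · -- bounds
    have hbd : ∀ i, ∃ m M : ℝ, 0 < m ∧ ∀ s, m ≤ |deriv (u i) s| ∧ |deriv (u i) s| ≤ M :=
      fun i => perBound ((hD i).continuous) (hT i) (hper i) (hne i)
    choose m M hm hmM using hbd
    have hmMle : ∀ i, m i ≤ M i := fun i => le_trans (hmM i 0).1 (hmM i 0).2
    have hMpos : ∀ i, 0 < M i := fun i => lt_of_lt_of_le (hm i) (hmMle i)
    have hPm : (0:ℝ) < ∏ i, m i := Finset.prod_pos fun i _ => hm i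
    have hPM : (0:ℝ) < ∏ i, M i := Finset.prod_pos fun i _ => hMpos i
    refine ⟨(∏ i, M i)⁻¹, (∏ i, m i)⁻¹, inv_pos.2 hPM, fun x => ?_⟩
    have habs : |∏ i, deriv (u i) (x i)| = ∏ i, |deriv (u i) (x i)| := Finset.abs_prod _ _
    have h1 : (∏ i, |deriv (u i) (x i)|) ≤ ∏ i, M i :=
      Finset.prod_le_prod (fun i _ => (abs_nonneg _)) (fun i _ => (hmM i (x i)).2)
    have h2 : (∏ i, m i) ≤ ∏ i, |deriv (u i) (x i)| :=
      Finset.prod_le_prod (fun i _ => (hm i).le) (fun i _ => (hmM i (x i)).1)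
    have hPx : (0:ℝ) < ∏ i, |deriv (u i) (x i)| := lt_of_lt_of_le hPm h2
    constructor
    · show (∏ i, M i)⁻¹ ≤ |∏ i, deriv (u i) (x i)|⁻¹
      rw [habs]
      exact inv_anti₀ hPx h1
    · show |∏ i, deriv (u i) (x i)|⁻¹ ≤ (∏ i, m i)⁻¹
      rw [habs]
      exact inv_anti₀ hPm h2
  · -- divergence
    intro x
    have hsign : ∀ i, ∃ e : ℝ, (e = 1 ∨ e = -1) ∧ ∀ t, |deriv (u i) t| = e * deriv (u i) t :=
      fun i => signConst ((hD i).continuous) (hne i)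
    choose e he1 he2 using hsign
    -- ∂U/∂xᵢ = uᵢ'(xᵢ)
    have hUd : ∀ (i : Fin d) (y : EuclideanSpace ℝ (Fin d)),
        fderiv ℝ U y (EuclideanSpace.single i 1) = deriv (u i) (y i) := by
      intro i y
      have hterm : ∀ j : Fin d, HasFDerivAt (fun z : EuclideanSpace ℝ (Fin d) => u j (z j))
          ((deriv (u j) (y j)) • (EuclideanSpace.proj j : EuclideanSpace ℝ (Fin d) →L[ℝ] ℝ)) y := by
        intro j
        have hd : HasDerivAt (u j) (deriv (u j) (y j)) (y j) :=
          (((hu j).differentiable (by norm_num)) (y j)).hasDerivAt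
        have hproj : HasFDerivAt (fun z : EuclideanSpace ℝ (Fin d) => z j)
            (EuclideanSpace.proj j : EuclideanSpace ℝ (Fin d) →L[ℝ] ℝ) y := by
          have h0 : HasFDerivAt (⇑(EuclideanSpace.proj j : EuclideanSpace ℝ (Fin d) →L[ℝ] ℝ))
              (EuclideanSpace.proj j : EuclideanSpace ℝ (Fin d) →L[ℝ] ℝ) y :=
            ContinuousLinearMap.hasFDerivAt _
          exact h0.congr_of_eventuallyEq (Filter.Eventually.of_forall fun z => rfl)
        exact hd.comp_hasFDerivAt y hproj
      have hU : HasFDerivAt U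
          (∑ j, (deriv (u j) (y j)) • (EuclideanSpace.proj j : EuclideanSpace ℝ (Fin d) →L[ℝ] ℝ)) y :=
        by have := HasFDerivAt.sum (u := Finset.univ) fun j _ => hterm j; exact this.congr_of_eventuallyEq (Filter.Eventually.of_forall fun z => by simp [U, Finset.sum_apply])
      rw [hU.fderiv]
      simp [EuclideanSpace.proj, EuclideanSpace.single_apply, mul_ite, Finset.sum_ite_eq']
    refine Finset.sum_eq_zero fun i _ => ?_
    set F : EuclideanSpace ℝ (Fin d) → ℝ :=
      fun y => e i * (∏ j ∈ Finset.univ.erase i, |deriv (u j) (y j)|)⁻¹ with hF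
    have key : ∀ y, σ y * fderiv ℝ U y (EuclideanSpace.single i 1) = F y := by
      intro y
      rw [hUd i y]
      have habs : |∏ j, deriv (u j) (y j)| = ∏ j, |deriv (u j) (y j)| := Finset.abs_prod _ _
      have hprod : (∏ j, |deriv (u j) (y j)|)
          = |deriv (u i) (y i)| * ∏ j ∈ Finset.univ.erase i, |deriv (u j) (y j)| :=
        (Finset.mul_prod_erase _ _ (Finset.mem_univ i)).symm
      have h1 : deriv (u i) (y i) = e i * |deriv (u i) (y i)| := by
        have h := he2 i (y i)
        rcases he1 i with h' | h' <;> rw [h'] at h ⊢ <;> linarith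
      have h2 : |deriv (u i) (y i)| ≠ 0 := abs_ne_zero.2 (hne i (y i))
      have h3 : (∏ j ∈ Finset.univ.erase i, |deriv (u j) (y j)|) ≠ 0 :=
        Finset.prod_ne_zero_iff.2 fun j _ => abs_ne_zero.2 (hne j (y j))
      show |∏ j, deriv (u j) (y j)|⁻¹ * deriv (u i) (y i) = F y
      rw [habs, hprod, hF]
      have hAD : |deriv (u i) (y i)|⁻¹ * deriv (u i) (y i) = e i := by
        field_simp
        linarith [h1]
      calc (|deriv (u i) (y i)| * ∏ j ∈ Finset.univ.erase i, |deriv (u j) (y j)|)⁻¹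
            * deriv (u i) (y i)
          = (|deriv (u i) (y i)|⁻¹ * deriv (u i) (y i))
            * (∏ j ∈ Finset.univ.erase i, |deriv (u j) (y j)|)⁻¹ := by
            rw [mul_inv]; ring
        _ = e i * (∏ j ∈ Finset.univ.erase i, |deriv (u j) (y j)|)⁻¹ := by rw [hAD]
    have hfeq : (fun y => σ y * fderiv ℝ U y (EuclideanSpace.single i 1)) = F := funext key
    rw [hfeq]
    -- F is differentiable at x
    have hdF : DifferentiableAt ℝ F x := by
      have hprodd : DifferentiableAt ℝ
          (fun y : EuclideanSpace ℝ (Fin d) => ∏ j ∈ Finset.univ.erase i, |deriv (u j) (y j)|) x := by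
        have hcd : ContDiffAt ℝ 1
            (fun y : EuclideanSpace ℝ (Fin d) => ∏ j ∈ Finset.univ.erase i, |deriv (u j) (y j)|) x := by
          refine contDiffAt_prod fun j _ => ?_
          exact ((hfac j).contDiffAt).abs (hne j (x j))
        exact hcd.differentiableAt (by norm_num)
      have h3 : (∏ j ∈ Finset.univ.erase i, |deriv (u j) (x j)|) ≠ 0 :=
        Finset.prod_ne_zero_iff.2 fun j _ => abs_ne_zero.2 (hne j (x j))
      exact (hprodd.inv h3).const_mul _
    -- F is constant along the eᵢ direction
    have hline : ∀ t : ℝ, F (x + t • EuclideanSpace.single i 1) = F x := by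
      intro t
      have : ∀ j ∈ Finset.univ.erase i,
          |deriv (u j) ((x + t • EuclideanSpace.single i 1 : EuclideanSpace ℝ (Fin d)) j)| = |deriv (u j) (x j)| := by
        intro j hj
        have hji : j ≠ i := Finset.ne_of_mem_erase hj
        have : (x + t • EuclideanSpace.single i 1 : EuclideanSpace ℝ (Fin d)) j = x j := by
          simp [EuclideanSpace.single_apply, hji]
        rw [this]
      rw [hF]
      simp only [Finset.prod_congr rfl this]
    have hφ : HasDerivAt (fun t : ℝ => x + t • EuclideanSpace.single i 1)
        (EuclideanSpace.single i 1) 0 := by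
      simpa using ((hasDerivAt_id (0:ℝ)).smul_const (EuclideanSpace.single i (1:ℝ))).const_add x
    have h1 : HasDerivAt (fun t : ℝ => F (x + t • EuclideanSpace.single i 1))
        (fderiv ℝ F x (EuclideanSpace.single i 1)) 0 := by
      exact hdF.hasFDerivAt.comp_hasDerivAt_of_eq 0 hφ (by simp)
    have h2 : HasDerivAt (fun t : ℝ => F (x + t • EuclideanSpace.single i 1)) 0 0 := by
      have : (fun t : ℝ => F (x + t • EuclideanSpace.single i 1)) = fun _ => F x := funext hline
      rw [this]; exact hasDerivAt_const _ _
    exact h1.unique h2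
end

section
/- Let u : ℝ^d → ℝ be C², let Ω ⊆ ℝ^d be open and bounded, and suppose σ ∈ C¹(Ω) is positive with div(σ∇u) = 0 in Ω, and σ, σ⁻¹ ∈ L^∞(Ω). If x ∈ Ω is such that the gradient flow X(t,x) stays in Ω for all t ≥ 0, then the function t ↦ ∫₀ᵗ Δu(X(s,x)) ds is bounded on [0,∞), with bound ln(‖σ‖_∞ ‖σ⁻¹‖_∞) independent of x and t. -/
/-- Partial derivative in direction `i`. -/
noncomputable def pd {d : ℕ} (i : Fin d) (f : EuclideanSpace ℝ (Fin d) → ℝ)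
    (x : EuclideanSpace ℝ (Fin d)) : ℝ := fderiv ℝ f x (EuclideanSpace.single i 1)

/-- Laplacian. -/
noncomputable def lap {d : ℕ} (f : EuclideanSpace ℝ (Fin d) → ℝ)
    (x : EuclideanSpace ℝ (Fin d)) : ℝ := ∑ i, pd i (pd i f) x

lemma aux_decomp {d : ℕ} (v : EuclideanSpace ℝ (Fin d)) :
    v = ∑ i, v i • EuclideanSpace.single i 1 := by
  ext j
  rw [WithLp.ofLp_sum, Finset.sum_apply]
  simp [EuclideanSpace.single_apply]

lemma grad_coord {d : ℕ} (f : EuclideanSpace ℝ (Fin d) → ℝ) (p : EuclideanSpace ℝ (Fin d))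
    (i : Fin d) : gradient f p i = fderiv ℝ f p (EuclideanSpace.single i 1) := by
  have h : fderiv ℝ f p (EuclideanSpace.single i 1)
      = inner ℝ (gradient f p) (EuclideanSpace.single i (1:ℝ)) := by
    rw [gradient]; simp
  rw [h, EuclideanSpace.inner_single_right]; simp

lemma key_identity_s15 {d : ℕ} (u σ : EuclideanSpace ℝ (Fin d) → ℝ)
    (hu : ContDiff ℝ 2 u) (p : EuclideanSpace ℝ (Fin d))
    (hσd : DifferentiableAt ℝ σ p)
    (hdiv : (∑ i, fderiv ℝ (fun y => σ y * pd i u y) p (EuclideanSpace.single i 1)) = 0) :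
    fderiv ℝ σ p (gradient u p) = -(σ p * lap u p) := by
  have hpdd : ∀ i : Fin d, DifferentiableAt ℝ (pd i u) p := fun i =>
    (((hu.fderiv_right (m := 1) (by norm_num)).clm_apply contDiff_const).differentiable
      (by norm_num)) p
  have hsum : ∀ i : Fin d, fderiv ℝ (fun y => σ y * pd i u y) p (EuclideanSpace.single i 1)
      = σ p * pd i (pd i u) p + pd i u p * fderiv ℝ σ p (EuclideanSpace.single i 1) := by
    intro i
    rw [fderiv_fun_mul hσd (hpdd i)]
    simp [pd]
  rw [Finset.sum_congr rfl (fun i _ => hsum i), Finset.sum_add_distrib,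
    ← Finset.mul_sum] at hdiv
  have hg : fderiv ℝ σ p (gradient u p)
      = ∑ i, pd i u p * fderiv ℝ σ p (EuclideanSpace.single i 1) := by
    conv_lhs => rw [aux_decomp (gradient u p)]
    rw [map_sum]
    refine Finset.sum_congr rfl fun i _ => ?_
    rw [map_smul, grad_coord]
    simp [pd, smul_eq_mul]
  rw [hg]
  have hl : ∑ i, pd i (pd i u) p = lap u p := rfl
  rw [hl] at hdiv
  linarith

lemma lap_continuous {d : ℕ} (u : EuclideanSpace ℝ (Fin d) → ℝ) (hu : ContDiff ℝ 2 u) :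
    Continuous (lap u) := by
  apply continuous_finset_sum
  intro i _
  have h1 : ContDiff ℝ 1 (pd i u) := (hu.fderiv_right (by norm_num)).clm_apply contDiff_const
  have h : ContDiff ℝ 0 (fderiv ℝ (pd i u)) := h1.fderiv_right (by norm_num)
  exact (h.clm_apply contDiff_const).continuous

/-- if σ > 0 is C¹ on an open bounded Ω with div(σ∇u) = 0 and σ ≤ M,
σ⁻¹ ≤ M' on Ω, and the forward trajectory of the gradient flow through x stays in Ω,
then |∫₀ᵗ Δu(X(s)) ds| ≤ ln(M·M') for all t ≥ 0. -/
theorem stmt15 {d : ℕ} (u σ : EuclideanSpace ℝ (Fin d) → ℝ)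
    (Ω : Set (EuclideanSpace ℝ (Fin d))) (hΩ : IsOpen Ω)
    (hΩb : Bornology.IsBounded Ω)
    (hu : ContDiff ℝ 2 u) (hσ : ContDiffOn ℝ 1 σ Ω) (hpos : ∀ p ∈ Ω, 0 < σ p)
    (hdiv : ∀ p ∈ Ω, (∑ i, fderiv ℝ (fun y => σ y * pd i u y) p
      (EuclideanSpace.single i 1)) = 0)
    (M M' : ℝ) (hM : ∀ p ∈ Ω, σ p ≤ M) (hM' : ∀ p ∈ Ω, (σ p)⁻¹ ≤ M')
    (x : EuclideanSpace ℝ (Fin d)) (hx : x ∈ Ω)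
    (X : ℝ → EuclideanSpace ℝ (Fin d)) (hX0 : X 0 = x)
    (hX : ∀ s, HasDerivAt X (gradient u (X s)) s)
    (hin : ∀ t ≥ (0:ℝ), X t ∈ Ω) :
    ∀ t ≥ (0:ℝ), |∫ s in (0:ℝ)..t, lap u (X s)| ≤ Real.log (M * M') := by
  intro t ht
  -- differentiability of σ on Ω
  have hσd : ∀ p ∈ Ω, DifferentiableAt ℝ σ p := fun p hp =>
    (hσ.contDiffAt (hΩ.mem_nhds hp)).differentiableAt one_ne_zero
  -- FTC
  have huicc : Set.uIcc (0:ℝ) t = Set.Icc 0 t := Set.uIcc_of_le ht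
  have hderiv : ∀ s ∈ Set.uIcc (0:ℝ) t,
      HasDerivAt (fun r => -Real.log (σ (X r))) (lap u (X s)) s := by
    intro s hs
    rw [huicc] at hs
    have hsΩ : X s ∈ Ω := hin s hs.1
    have h1 : HasDerivAt (fun r => σ (X r)) (fderiv ℝ σ (X s) (gradient u (X s))) s :=
      ((hσd _ hsΩ).hasFDerivAt).comp_hasDerivAt s (hX s)
    have h2 : HasDerivAt (fun r => Real.log (σ (X r)))
        (fderiv ℝ σ (X s) (gradient u (X s)) / σ (X s)) s :=
      h1.log (ne_of_gt (hpos _ hsΩ))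
    have h3 := h2.neg
    have hkey := key_identity_s15 u σ hu (X s) (hσd _ hsΩ) (hdiv _ hsΩ)
    have : -(fderiv ℝ σ (X s) (gradient u (X s)) / σ (X s)) = lap u (X s) := by
      rw [hkey]
      field_simp [ne_of_gt (hpos _ hsΩ)]
    rwa [this] at h3
  have hXc : Continuous X := by
    rw [continuous_iff_continuousAt]
    exact fun s => (hX s).continuousAt
  have hint : IntervalIntegrable (fun s => lap u (X s)) MeasureTheory.volume 0 t :=
    ((lap_continuous u hu).comp hXc).intervalIntegrable 0 t
  have hftc := intervalIntegral.integral_eq_sub_of_hasDerivAt hderiv hint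
  rw [hftc, hX0]
  -- bounds
  have hxt : X t ∈ Ω := hin t ht
  have ha : 0 < σ x := hpos _ hx
  have hb : 0 < σ (X t) := hpos _ hxt
  have hMpos : 0 < M := lt_of_lt_of_le ha (hM _ hx)
  have hM'pos : 0 < M' := lt_of_lt_of_le (inv_pos.mpr ha) (hM' _ hx)
  rw [Real.log_mul (ne_of_gt hMpos) (ne_of_gt hM'pos), abs_le]
  constructor
  · have h1 : Real.log (σ (X t)) ≤ Real.log M := Real.log_le_log hb (hM _ hxt)
    have h2 : -Real.log (σ x) = Real.log (σ x)⁻¹ := (Real.log_inv _).symm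
    have h3 : Real.log (σ x)⁻¹ ≤ Real.log M' :=
      Real.log_le_log (inv_pos.mpr ha) (hM' _ hx)
    linarith
  · have h1 : Real.log (σ x) ≤ Real.log M := Real.log_le_log ha (hM _ hx)
    have h2 : -Real.log (σ (X t)) = Real.log (σ (X t))⁻¹ := (Real.log_inv _).symm
    have h3 : Real.log (σ (X t))⁻¹ ≤ Real.log M' :=
      Real.log_le_log (inv_pos.mpr hb) (hM' _ hxt)
    linarith
end

section
/- Let F : (0,1] → (−∞,β] be defined implicitly by x = exp(F(x) + ln²|F(x)|) with F(1) = β (β the unique negative solution of β + ln²|β| = 0 at x = 1). Then F is well defined, one-to-one, increasing, of class C², and satisfies: F(x) → −∞ as x → 0⁺, F'(x) → ∞ as x → 0⁺, lim_{x→0⁺} x F'(x) = 1, and lim_{x→0⁺} x² F''(x) = −1. -/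
open Real Filter Set Topology

noncomputable section

private def g17 (y : ℝ) : ℝ := y + Real.log y ^ 2
private def u17 (y : ℝ) : ℝ := 1 + 2 * (Real.log y / y)
private def v17 (y : ℝ) : ℝ := 2 * (1 - Real.log y) / y ^ 2

private lemma two_log_lt {t : ℝ} (ht : 0 < t) : 2 * Real.log t < t := by
  rcases eq_or_ne t 1 with rfl | h1
  · simp
  · have hs : Real.log (Real.sqrt t) < Real.sqrt t - 1 :=
      Real.log_lt_sub_one_of_pos (Real.sqrt_pos.2 ht) (fun h => h1 (Real.sqrt_eq_one.1 h))
    have h2 : Real.log (Real.sqrt t) = Real.log t / 2 := Real.log_sqrt ht.le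
    nlinarith [sq_nonneg (Real.sqrt t - 2), Real.sq_sqrt ht.le]

private lemma u17_pos {y : ℝ} (hy : y < 0) : 0 < u17 y := by
  have h := two_log_lt (t := -y) (by linarith)
  have hlog : Real.log y = Real.log (-y) := (Real.log_neg_eq_log y).symm
  have h2 : (-1 : ℝ) < 2 * Real.log y / y := by
    rw [hlog, lt_div_iff_of_neg hy]
    linarith
  have : 2 * (Real.log y / y) = 2 * Real.log y / y := by ring
  unfold u17
  rw [this]
  linarith

private lemma hasDerivAt_g17 {y : ℝ} (hy : y ≠ 0) : HasDerivAt g17 (u17 y) y := by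
  have h2 := (hasDerivAt_id y).add ((Real.hasDerivAt_log hy).pow 2)
  have he : (fun y : ℝ => id y + Real.log y ^ 2) = g17 := by
    funext z; simp [g17]
  rw [show (id + Real.log ^ 2 : ℝ → ℝ) = g17 from he] at h2
  refine h2.congr_deriv ?_
  unfold u17
  field_simp
  norm_num

private lemma hasDerivAt_u17 {y : ℝ} (hy : y ≠ 0) : HasDerivAt u17 (v17 y) y := by
  have h := ((Real.hasDerivAt_log hy).div (hasDerivAt_id y) hy)
  have h2 := (h.const_mul (2:ℝ)).const_add (1:ℝ)
  have he : (fun y : ℝ => 1 + 2 * (Real.log y / id y)) = u17 := by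
    funext z; simp [u17]
  rw [show (fun x => 1 + 2 * (Real.log / (id : ℝ → ℝ)) x) = u17 from he] at h2
  refine h2.congr_deriv ?_
  unfold v17
  field_simp
  simp only [id]
  field_simp

private lemma g17_mono : StrictMonoOn g17 (Iio (0:ℝ)) := by
  apply strictMonoOn_of_deriv_pos (convex_Iio 0)
  · intro y hy
    exact (hasDerivAt_g17 (ne_of_lt hy)).continuousAt.continuousWithinAt
  · intro y hy
    rw [interior_Iio] at hy
    rw [(hasDerivAt_g17 (ne_of_lt hy)).deriv]
    exact u17_pos hy

private lemma g17_atBot : Tendsto g17 atBot atBot := by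
  have h0' : Tendsto (fun t : ℝ => Real.log t ^ 2 / t) atTop (𝓝 0) := by
    simpa using Real.tendsto_pow_log_div_mul_add_atTop 1 0 2 one_ne_zero
  have hg : Tendsto (fun t : ℝ => (1:ℝ) - Real.log t ^ 2 / t) atTop (𝓝 1) := by
    simpa using tendsto_const_nhds.sub h0'
  have h1 : Tendsto (fun t : ℝ => t * (1 - Real.log t ^ 2 / t)) atTop atTop :=
    tendsto_id.atTop_mul_pos one_pos hg
  have h2 : Tendsto (fun t : ℝ => -t + Real.log t ^ 2) atTop atBot := by
    have h3 := tendsto_neg_atTop_atBot.comp h1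
    refine h3.congr' ?_
    filter_upwards [eventually_gt_atTop (0:ℝ)] with t ht
    have ht' : t ≠ 0 := ht.ne'
    show -(t * (1 - Real.log t ^ 2 / t)) = -t + Real.log t ^ 2
    field_simp
    ring
  have h4 := h2.comp tendsto_neg_atBot_atTop
  refine h4.congr fun y => ?_
  show -(-y) + Real.log (-y) ^ 2 = g17 y
  rw [Real.log_neg_eq_log, neg_neg, g17]

private lemma g17_nhds0 : Tendsto g17 (𝓝[<] (0:ℝ)) atTop := by
  have hlog : Tendsto Real.log (𝓝[<] (0:ℝ)) atBot :=
    Real.tendsto_log_nhdsNE_zero.mono_left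
      (nhdsWithin_mono 0 (fun y hy => ne_of_lt hy))
  have hsq : Tendsto (fun y => Real.log y ^ 2) (𝓝[<] (0:ℝ)) atTop := by
    have h := hlog.atBot_mul_atBot₀ hlog
    refine h.congr fun y => by ring
  have hy0 : Tendsto (fun y : ℝ => y) (𝓝[<] (0:ℝ)) (𝓝 0) :=
    tendsto_id.mono_left nhdsWithin_le_nhds
  exact hy0.add_atTop hsq

private lemma g17_surj (r : ℝ) : ∃ y, y < 0 ∧ g17 y = r := by
  obtain ⟨a, har, ha0⟩ :=
    ((g17_atBot.eventually (eventually_le_atBot r)).and (eventually_lt_atBot (0:ℝ))).exists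
  have h1 : ∀ᶠ y in 𝓝[<] (0:ℝ), r ≤ g17 y := g17_nhds0.eventually (eventually_ge_atTop r)
  have h2 : Ioo a 0 ∈ 𝓝[<] (0:ℝ) := Ioo_mem_nhdsLT_of_mem ⟨ha0, le_refl 0⟩
  obtain ⟨b, hbr, hb⟩ := (h1.and (eventually_of_mem h2 (fun y hy => hy))).exists
  have hcont : ContinuousOn g17 (Icc a b) := fun y hy =>
    (hasDerivAt_g17 (ne_of_lt (lt_of_le_of_lt hy.2 hb.2))).continuousAt.continuousWithinAt
  obtain ⟨y, hy, hgy⟩ := intermediate_value_Icc (le_of_lt hb.1) hcont ⟨har, hbr⟩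
  exact ⟨y, lt_of_le_of_lt hy.2 hb.2, hgy⟩

private lemma log_div_self_atBot : Tendsto (fun y : ℝ => Real.log y / y) atBot (𝓝 0) := by
  have h1 : Tendsto (fun t : ℝ => Real.log t / t) atTop (𝓝 0) := by
    simpa using Real.tendsto_pow_log_div_mul_add_atTop 1 0 1 one_ne_zero
  have h3 := (h1.comp tendsto_neg_atBot_atTop).neg
  rw [neg_zero] at h3
  refine h3.congr fun y => ?_
  show -(Real.log (-y) / -y) = Real.log y / y
  rw [Real.log_neg_eq_log, div_neg, neg_neg]

private lemma u17_lim : Tendsto u17 atBot (𝓝 1) := by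
  have h := (log_div_self_atBot.const_mul (2:ℝ)).const_add (1:ℝ)
  rw [mul_zero, add_zero] at h
  exact h

private lemma inv_atBot_zero : Tendsto (fun y : ℝ => y⁻¹) atBot (𝓝 0) := by
  have h1 : Tendsto (fun t : ℝ => t⁻¹) atTop (𝓝 0) := tendsto_inv_atTop_zero
  have h2 : Tendsto (fun y : ℝ => -y) atBot atTop := tendsto_neg_atBot_atTop
  have h := (h1.comp h2).neg
  rw [neg_zero] at h
  refine h.congr fun y => ?_
  show -(-y)⁻¹ = y⁻¹
  rw [inv_neg, neg_neg]

private lemma v17_lim : Tendsto v17 atBot (𝓝 0) := by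
  have h := ((inv_atBot_zero.mul inv_atBot_zero).sub
    (log_div_self_atBot.mul inv_atBot_zero)).const_mul (2:ℝ)
  norm_num at h
  refine h.congr' ?_
  filter_upwards [eventually_lt_atBot (0:ℝ)] with y hy
  have hy' : y ≠ 0 := hy.ne
  show 2 * (y⁻¹ * y⁻¹ - Real.log y / y * y⁻¹) = v17 y
  unfold v17
  rw [eq_div_iff (pow_ne_zero 2 hy')]
  field_simp

/-- the implicit relation x = exp(F(x) + ln²|F(x)|), F(1) = β (with β < 0 the
solution of β + ln²|β| = 0) defines a one-to-one, increasing, C² function F on (0,1] with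
F(x) → −∞, F'(x) → ∞, xF'(x) → 1 and x²F''(x) → −1 as x → 0⁺. -/
theorem stmt17 (β : ℝ) (hβneg : β < 0) (hβ : β + Real.log |β| ^ 2 = 0) :
    ∃ F : ℝ → ℝ,
      (∀ x ∈ Set.Ioc (0:ℝ) 1, F x ≤ β ∧ x = Real.exp (F x + Real.log |F x| ^ 2)) ∧
      F 1 = β ∧
      Set.InjOn F (Set.Ioc (0:ℝ) 1) ∧
      StrictMonoOn F (Set.Ioc (0:ℝ) 1) ∧
      ContDiffOn ℝ 2 F (Set.Ioc (0:ℝ) 1) ∧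
      Filter.Tendsto F (nhdsWithin 0 (Set.Ioi 0)) Filter.atBot ∧
      Filter.Tendsto (deriv F) (nhdsWithin 0 (Set.Ioi 0)) Filter.atTop ∧
      Filter.Tendsto (fun x => x * deriv F x) (nhdsWithin 0 (Set.Ioi 0)) (nhds 1) ∧
      Filter.Tendsto (fun x => x ^ 2 * deriv (deriv F) x) (nhdsWithin 0 (Set.Ioi 0))
        (nhds (-1)) := by
  classical
  set F : ℝ → ℝ := fun x => if h : 0 < x then (g17_surj (Real.log x)).choose else β with hFdef
  have hFspec : ∀ {x : ℝ}, 0 < x → F x < 0 ∧ g17 (F x) = Real.log x := by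
    intro x hx
    have h := (g17_surj (Real.log x)).choose_spec
    simp only [hFdef, dif_pos hx]
    exact h
  have hFneg : ∀ {x : ℝ}, 0 < x → F x < 0 := fun hx => (hFspec hx).1
  have hFg : ∀ {x : ℝ}, 0 < x → g17 (F x) = Real.log x := fun hx => (hFspec hx).2
  have hu_ne : ∀ {x : ℝ}, 0 < x → u17 (F x) ≠ 0 := fun hx => (u17_pos (hFneg hx)).ne'
  have hlt : ∀ {x₁ x₂ : ℝ}, 0 < x₁ → 0 < x₂ → x₁ < x₂ → F x₁ < F x₂ := by
    intro x₁ x₂ h1 h2 h12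
    refine (g17_mono.lt_iff_lt (hFneg h1) (hFneg h2)).1 ?_
    rw [hFg h1, hFg h2]
    exact Real.log_lt_log h1 h12
  have hgβ : g17 β = 0 := by
    unfold g17; rw [← Real.log_abs]; exact hβ
  have hF1 : F 1 = β := by
    have h1 : g17 (F 1) = g17 β := by
      rw [hFg one_pos, Real.log_one, hgβ]
    exact g17_mono.injOn (hFneg one_pos) hβneg h1
  have hsm : StrictMonoOn F (Set.Ioc (0:ℝ) 1) := fun x hx y hy h => hlt hx.1 hy.1 h
  -- continuity
  have hcontF : ∀ {x : ℝ}, 0 < x → ContinuousAt F x := by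
    intro x hx
    refine tendsto_order.2 ⟨?_, ?_⟩
    · intro a ha
      have ha0 : a < 0 := ha.trans (hFneg hx)
      have hga : g17 a < Real.log x := by
        rw [← hFg hx]; exact g17_mono ha0 (hFneg hx) ha
      have hx' : Real.exp (g17 a) < x := (Real.lt_log_iff_exp_lt hx).1 hga
      filter_upwards [Ioi_mem_nhds hx'] with z hz
      have hz0 : 0 < z := (Real.exp_pos _).trans hz
      have h : g17 a < g17 (F z) := by
        rw [hFg hz0]; exact (Real.lt_log_iff_exp_lt hz0).2 hz
      exact (g17_mono.lt_iff_lt ha0 (hFneg hz0)).1 h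
    · intro b hb
      rcases lt_or_ge b 0 with hb0 | hb0
      · have hgb : Real.log x < g17 b := by
          rw [← hFg hx]; exact g17_mono (hFneg hx) hb0 hb
        have hx' : x < Real.exp (g17 b) := (Real.log_lt_iff_lt_exp hx).1 hgb
        filter_upwards [IsOpen.mem_nhds isOpen_Ioo (⟨hx, hx'⟩ : x ∈ Ioo 0 (Real.exp (g17 b)))]
          with z hz
        have hz0 : 0 < z := hz.1
        have h : g17 (F z) < g17 b := by
          rw [hFg hz0]; exact (Real.log_lt_iff_lt_exp hz0).2 hz.2
        exact (g17_mono.lt_iff_lt (hFneg hz0) hb0).1 h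
      · filter_upwards [Ioi_mem_nhds hx] with z hz
        exact (hFneg hz).trans_le hb0
  -- derivative
  have hDF : ∀ {x : ℝ}, 0 < x → HasDerivAt F (x * u17 (F x))⁻¹ x := by
    intro x hx
    have hexp : HasDerivAt (fun y => Real.exp (g17 y)) (x * u17 (F x)) (F x) := by
      have h := (hasDerivAt_g17 (hFneg hx).ne).exp
      rwa [hFg hx, Real.exp_log hx] at h
    have hne : x * u17 (F x) ≠ 0 := mul_ne_zero hx.ne' (hu_ne hx)
    have hfg : ∀ᶠ z in 𝓝 x, Real.exp (g17 (F z)) = z := by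
      filter_upwards [Ioi_mem_nhds hx] with z hz
      rw [hFg hz, Real.exp_log hz]
    exact HasDerivAt.of_local_left_inverse (hcontF hx) hexp hne hfg
  have hderivF : ∀ {x : ℝ}, 0 < x → deriv F x = (x * u17 (F x))⁻¹ := fun hx => (hDF hx).deriv
  -- F → -∞
  have htFbot : Tendsto F (𝓝[>] (0:ℝ)) atBot := by
    rw [tendsto_atBot]
    intro M
    have hM'0 : min M (-1) < 0 := lt_of_le_of_lt (min_le_right _ _) (by norm_num)
    have hmem : Ioo (0:ℝ) (Real.exp (g17 (min M (-1)))) ∈ 𝓝[>] (0:ℝ) :=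
      Ioo_mem_nhdsGT_of_mem ⟨le_refl 0, Real.exp_pos _⟩
    filter_upwards [hmem] with x hx
    have hx0 : 0 < x := hx.1
    have h : g17 (F x) < g17 (min M (-1)) := by
      rw [hFg hx0]; exact (Real.log_lt_iff_lt_exp hx0).2 hx.2
    have h2 := (g17_mono.lt_iff_lt (hFneg hx0) hM'0).1 h
    exact le_trans h2.le (min_le_left _ _)
  have huF : Tendsto (fun x => u17 (F x)) (𝓝[>] (0:ℝ)) (𝓝 1) := u17_lim.comp htFbot
  have hvF : Tendsto (fun x => v17 (F x)) (𝓝[>] (0:ℝ)) (𝓝 0) := v17_lim.comp htFbot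
  -- x F'(x) → 1
  have hxF' : Tendsto (fun x => x * deriv F x) (𝓝[>] (0:ℝ)) (𝓝 1) := by
    have h := huF.inv₀ one_ne_zero
    rw [inv_one] at h
    refine h.congr' ?_
    filter_upwards [self_mem_nhdsWithin] with x hx
    have hx0 : 0 < x := hx
    rw [hderivF hx0, mul_inv, ← mul_assoc, mul_inv_cancel₀ hx0.ne', one_mul]
  -- F' → ∞
  have hd_top : Tendsto (deriv F) (𝓝[>] (0:ℝ)) atTop := by
    have hW : Tendsto (fun x => x * u17 (F x)) (𝓝[>] (0:ℝ)) (𝓝[>] 0) := by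
      rw [tendsto_nhdsWithin_iff]
      constructor
      · have hx0 : Tendsto (fun x : ℝ => x) (𝓝[>] (0:ℝ)) (𝓝 0) :=
          tendsto_id.mono_left nhdsWithin_le_nhds
        simpa using hx0.mul huF
      · filter_upwards [self_mem_nhdsWithin] with x hx
        exact mul_pos hx (u17_pos (hFneg hx))
    have h := hW.inv_tendsto_nhdsGT_zero
    refine h.congr' ?_
    filter_upwards [self_mem_nhdsWithin] with x hx
    rw [Pi.inv_apply, hderivF hx]
  -- second derivative
  have hUF : ∀ {x : ℝ}, 0 < x →
      HasDerivAt (fun z => u17 (F z)) (v17 (F x) * (x * u17 (F x))⁻¹) x :=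
    fun hx => (hasDerivAt_u17 (hFneg hx).ne).comp _ (hDF hx)
  have hW' : ∀ {x : ℝ}, 0 < x → HasDerivAt (fun z => z * u17 (F z))
      (1 * u17 (F x) + x * (v17 (F x) * (x * u17 (F x))⁻¹)) x :=
    fun hx => (hasDerivAt_id _).mul (hUF hx)
  have hDD : ∀ {x : ℝ}, 0 < x → HasDerivAt (deriv F)
      (-(1 * u17 (F x) + x * (v17 (F x) * (x * u17 (F x))⁻¹)) / (x * u17 (F x)) ^ 2) x := by
    intro x hx
    have h1 := (hW' hx).inv (mul_ne_zero hx.ne' (hu_ne hx))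
    apply h1.congr_of_eventuallyEq
    filter_upwards [Ioi_mem_nhds hx] with z hz
    exact hderivF hz
  have hderiv2 : ∀ {x : ℝ}, 0 < x → deriv (deriv F) x =
      -(1 * u17 (F x) + x * (v17 (F x) * (x * u17 (F x))⁻¹)) / (x * u17 (F x)) ^ 2 :=
    fun hx => (hDD hx).deriv
  -- x² F'' → -1
  have hx2F'' : Tendsto (fun x => x ^ 2 * deriv (deriv F) x) (𝓝[>] (0:ℝ)) (𝓝 (-1)) := by
    have h : Tendsto (fun x => -(u17 (F x) + v17 (F x) / u17 (F x)) / u17 (F x) ^ 2)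
        (𝓝[>] (0:ℝ)) (𝓝 (-((1:ℝ) + 0 / 1) / 1 ^ 2)) :=
      Tendsto.div ((huF.add (hvF.div huF one_ne_zero)).neg) (huF.pow 2) (by norm_num)
    rw [show -((1:ℝ) + 0 / 1) / 1 ^ 2 = -1 by norm_num] at h
    refine h.congr' ?_
    filter_upwards [self_mem_nhdsWithin] with x hx
    have hx0 : 0 < x := hx
    have h1 : x ≠ 0 := hx0.ne'
    have h2 := hu_ne hx0
    rw [hderiv2 hx0]
    field_simp
  -- C²
  have hcd : ContDiffOn ℝ 2 F (Set.Ioi (0:ℝ)) := by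
    rw [show (2 : WithTop ℕ∞) = 1 + 1 by norm_num,
      contDiffOn_succ_iff_deriv_of_isOpen isOpen_Ioi]
    refine ⟨fun x hx => (hDF hx).differentiableAt.differentiableWithinAt, by simp, ?_⟩
    rw [show (1 : WithTop ℕ∞) = 0 + 1 by norm_num,
      contDiffOn_succ_iff_deriv_of_isOpen isOpen_Ioi]
    refine ⟨fun x hx => (hDD hx).differentiableAt.differentiableWithinAt, by simp, ?_⟩
    rw [contDiffOn_zero]
    have hcE : ContinuousOn
        (fun x => -(1 * u17 (F x) + x * (v17 (F x) * (x * u17 (F x))⁻¹)) / (x * u17 (F x)) ^ 2)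
        (Set.Ioi (0:ℝ)) := by
      intro x hx
      have hx0 : 0 < x := hx
      have hu : ContinuousAt (fun z => u17 (F z)) x := (hUF hx0).continuousAt
      have hv : ContinuousAt (fun z => v17 (F z)) x := by
        have hne := (hFneg hx0).ne
        have hvc : ContinuousAt v17 (F x) := by
          show ContinuousAt (fun y => 2 * (1 - Real.log y) / y ^ 2) (F x)
          exact ContinuousAt.div
            (continuousAt_const.mul (continuousAt_const.sub (Real.continuousAt_log hne)))
            (continuousAt_id.pow 2) (pow_ne_zero 2 hne)
        exact hvc.comp (hcontF hx0)
      have hWc : ContinuousAt (fun z => z * u17 (F z)) x := continuousAt_id.mul hu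
      have hWne : x * u17 (F x) ≠ 0 := mul_ne_zero hx0.ne' (hu_ne hx0)
      exact (ContinuousAt.div
        (((continuousAt_const.mul hu).add
          (continuousAt_id.mul (hv.mul (hWc.inv₀ hWne)))).neg)
        (hWc.pow 2) (pow_ne_zero 2 hWne)).continuousWithinAt
    exact hcE.congr (fun x hx => hderiv2 hx)
  refine ⟨F, ?_, hF1, hsm.injOn, hsm, hcd.mono Set.Ioc_subset_Ioi_self,
    htFbot, hd_top, hxF', hx2F''⟩
  intro x hx
  constructor
  · rcases eq_or_lt_of_le hx.2 with h | h
    · rw [h, hF1]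
    · exact le_of_lt (hF1 ▸ hlt hx.1 one_pos h)
  · have h : F x + Real.log |F x| ^ 2 = g17 (F x) := by
      rw [Real.log_abs]; rfl
    rw [h, hFg hx.1, Real.exp_log hx.1]

end
end
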